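/- arXiv:1411.6277 — 3 statements merged into one kernel-verified Lean document; each statement's English description precedes it below -/
import Mathlib

section
/- Let V be a Banach space, d ≥ 1, Q ⊂ ℝ^d an open bounded cube, p ≥ 1, and δ ∈ (0,1]. Let f : Q → V be Bochner integrable with finite fractional seminorm [f]_{δ,p;Q;V} := ( ∫_Q ∫_Q |f(x) − f(y)|_V^p / |x−y|^{2d+δp} dx dy )^{1/p} < ∞. Then f has a modification (a function equal to f almost everywhere on Q) belonging to C^δ(Q;V), and there is a constant N = N(d,δ,p), independent of f and of Q, such that this modification satisfies [f]_{δ;Q;V} ≤ N [f]_{δ,p;Q;V} and sup_{x∈Q} |f(x)|_V ≤ N |Q|^{δ/d} [f]_{δ,p;Q;V} + |Q|^{−1/p} ( ∫_Q |f(x)|_V^p dx )^{1/p}, where |Q| denotes the volume of the cube Q. -/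
open MeasureTheory ENNReal

set_option linter.unusedSectionVars false
set_option linter.unusedVariables false
set_option maxHeartbeats 1000000

namespace GRRAux

section Geometry


variable {d : ℕ}

def box (b : Fin d → ℝ) (s : ℝ) : Set (EuclideanSpace ℝ (Fin d)) :=
  {y | ∀ i, y i ∈ Set.Ioo (b i) (b i + s)}

lemma box_eq_preimage (b : Fin d → ℝ) (s : ℝ) :
    box b s = ((MeasurableEquiv.toLp 2 (Fin d → ℝ)).symm) ⁻¹'
      (Set.univ.pi fun i => Set.Ioo (b i) (b i + s)) := by
  ext y
  simp [box, Set.mem_pi]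

lemma measurableSet_box (b : Fin d → ℝ) (s : ℝ) : MeasurableSet (box b s) := by
  rw [box_eq_preimage]
  exact (MeasurableEquiv.toLp 2 (Fin d → ℝ)).symm.measurable
    (MeasurableSet.univ_pi fun i => measurableSet_Ioo)

lemma volume_box (b : Fin d → ℝ) (s : ℝ) :
    volume (box b s) = ENNReal.ofReal s ^ d := by
  rw [box_eq_preimage,
    (EuclideanSpace.volume_preserving_symm_measurableEquiv_toLp (Fin d)).measure_preimage
      (MeasurableSet.univ_pi fun i => measurableSet_Ioo).nullMeasurableSet,
    volume_pi_pi]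
  simp

lemma norm_le_of_coords {x y : EuclideanSpace ℝ (Fin d)} {s : ℝ} (hs : 0 ≤ s)
    (h : ∀ i, dist (x i) (y i) ≤ s) : dist x y ≤ s * Real.sqrt d := by
  rw [EuclideanSpace.dist_eq]
  have h1 : ∑ i, dist (x i) (y i) ^ 2 ≤ (d : ℝ) * s ^ 2 := by
    calc ∑ i, dist (x i) (y i) ^ 2 ≤ ∑ _i : Fin d, s ^ 2 :=
          Finset.sum_le_sum fun i _ => by
            have := h i; nlinarith [dist_nonneg (x := x i) (y := y i)]
      _ = (d : ℝ) * s ^ 2 := by simp [mul_comm]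
  calc Real.sqrt (∑ i, dist (x i) (y i) ^ 2) ≤ Real.sqrt ((d : ℝ) * s ^ 2) :=
        Real.sqrt_le_sqrt h1
    _ = s * Real.sqrt d := by
        rw [Real.sqrt_mul (by positivity), Real.sqrt_sq hs, mul_comm]

lemma dist_lt_of_mem_box {a : Fin d → ℝ} {c : ℝ} (hd : 1 ≤ d) (hc : 0 < c)
    {x y : EuclideanSpace ℝ (Fin d)} (hx : x ∈ box a c) (hy : y ∈ box a c) :
    dist x y < c * Real.sqrt d := by
  rw [EuclideanSpace.dist_eq]
  have h1 : ∑ i, dist (x i) (y i) ^ 2 < (d : ℝ) * c ^ 2 := by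
    have hne : (Finset.univ : Finset (Fin d)).Nonempty := by
      simpa [Finset.univ_nonempty_iff, ← Fin.pos_iff_nonempty] using Nat.lt_of_lt_of_le Nat.zero_lt_one hd
    calc ∑ i, dist (x i) (y i) ^ 2 < ∑ _i : Fin d, c ^ 2 := by
          refine Finset.sum_lt_sum_of_nonempty hne fun i _ => ?_
          have h1 := hx i; have h2 := hy i
          simp only [Set.mem_Ioo] at h1 h2
          have : dist (x i) (y i) < c := by
            rw [Real.dist_eq, abs_lt]; constructor <;> nlinarith [h1.1, h1.2, h2.1, h2.2]
          nlinarith [dist_nonneg (x := x i) (y := y i)]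
      _ = (d : ℝ) * c ^ 2 := by simp [mul_comm]
  calc Real.sqrt (∑ i, dist (x i) (y i) ^ 2) < Real.sqrt ((d : ℝ) * c ^ 2) := by
        apply Real.sqrt_lt_sqrt (by positivity) h1
    _ = c * Real.sqrt d := by
        rw [Real.sqrt_mul (by positivity), Real.sqrt_sq hc.le, mul_comm]

lemma volume_inter_ball_ge (hd : 1 ≤ d) {a : Fin d → ℝ} {c : ℝ} (hc : 0 < c)
    {x : EuclideanSpace ℝ (Fin d)} (hx : x ∈ box a c) {ρ : ℝ} (hρ : 0 < ρ)
    (hρR : ρ ≤ c * Real.sqrt d) :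
    ENNReal.ofReal ((ρ / (2 * Real.sqrt d)) ^ d) ≤ volume (box a c ∩ Metric.ball x ρ) := by
  have hdpos : (0:ℝ) < Real.sqrt d := Real.sqrt_pos.2 (by exact_mod_cast hd)
  set σ := ρ / (2 * Real.sqrt d) with hσdef
  have hσ : 0 < σ := by positivity
  have h2σ : 2 * σ ≤ c := by
    have h1 : ρ / Real.sqrt d ≤ c := by rw [div_le_iff₀ hdpos]; linarith
    have h2 : 2 * σ = ρ / Real.sqrt d := by rw [hσdef]; field_simp
    linarith
  set b : Fin d → ℝ := fun i => if a i + σ ≤ x i then x i - σ else x i with hb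
  have hcoord : ∀ y ∈ box b σ, ∀ i, dist (y i) (x i) ≤ σ := by
    intro y hy i
    have hyi := hy i
    simp only [Set.mem_Ioo] at hyi
    rw [Real.dist_eq, abs_le]
    by_cases hcase : a i + σ ≤ x i
    · have hbi : b i = x i - σ := by simp only [hb]; rw [if_pos hcase]
      rw [hbi] at hyi
      constructor <;> linarith [hyi.1, hyi.2]
    · have hbi : b i = x i := by simp only [hb]; rw [if_neg hcase]
      rw [hbi] at hyi
      constructor <;> linarith [hyi.1, hyi.2]
  have hsub : box b σ ⊆ box a c ∩ Metric.ball x ρ := by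
    intro y hy
    constructor
    · intro i
      have hyi := hy i
      have hxi := hx i
      simp only [Set.mem_Ioo] at hyi hxi ⊢
      by_cases hcase : a i + σ ≤ x i
      · have hbi : b i = x i - σ := by simp only [hb]; rw [if_pos hcase]
        rw [hbi] at hyi
        constructor <;> nlinarith [hyi.1, hyi.2, hxi.1, hxi.2]
      · have hbi : b i = x i := by simp only [hb]; rw [if_neg hcase]
        rw [hbi] at hyi
        push_neg at hcase
        constructor <;> nlinarith [hyi.1, hyi.2, hxi.1, hxi.2]
    · rw [Metric.mem_ball]
      have h1 : dist y x ≤ σ * Real.sqrt d := norm_le_of_coords hσ.le (hcoord y hy)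
      have h2 : σ * Real.sqrt d = ρ / 2 := by
        rw [hσdef]; field_simp
      rw [h2] at h1
      linarith
  calc ENNReal.ofReal (σ ^ d) = volume (box b σ) := by
        rw [volume_box, ENNReal.ofReal_pow hσ.le]
    _ ≤ volume (box a c ∩ Metric.ball x ρ) := measure_mono hsub


end Geometry

section Averages
variable {α : Type*} [MeasurableSpace α] {μ : Measure α}
variable {V : Type*} [NormedAddCommGroup V] [NormedSpace ℝ V] [CompleteSpace V]
lemma lint_holder {F : α → ℝ≥0∞} (hF : AEMeasurable F μ) {p : ℝ} (hp : 1 ≤ p) :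
    ∫⁻ a, F a ∂μ ≤ (∫⁻ a, F a ^ p ∂μ) ^ (1/p) * (μ Set.univ) ^ (1 - 1/p) := by
  rcases eq_or_lt_of_le hp with heq | hlt
  · simp [← heq]
  · have hpq := Real.HolderConjugate.conjExponent hlt
    have h := ENNReal.lintegral_mul_le_Lp_mul_Lq μ hpq hF
      (aemeasurable_const (b := (1:ℝ≥0∞)))
    simp only [Pi.mul_apply, mul_one, ENNReal.one_rpow, lintegral_one] at h
    have hq : 1 / p.conjExponent = 1 - 1/p := by
      have := hpq.inv_add_inv_eq_one
      have h2 : 1/p + 1/p.conjExponent = 1 := by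
        simpa [one_div] using this
      linarith
    rwa [hq] at h

noncomputable def Av (μ : Measure α) (f : α → V) (S : Set α) : V :=
  (μ S).toReal⁻¹ • ∫ u in S, f u ∂μ

lemma Av_sub_const {f : α → V} {S : Set α} (w : V) (hS0 : μ S ≠ 0) (hSfin : μ S ≠ ⊤)
    (hfi : IntegrableOn f S μ) :
    Av μ f S - w = (μ S).toReal⁻¹ • ∫ u in S, (f u - w) ∂μ := by
  have htR : (μ S).toReal ≠ 0 := ENNReal.toReal_ne_zero.2 ⟨hS0, hSfin⟩
  rw [integral_sub hfi (integrableOn_const hSfin),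
    setIntegral_const, smul_sub, Av, smul_smul, measureReal_def, inv_mul_cancel₀ htR, one_smul]

lemma ennnorm_Av_sub_const {f : α → V} {S : Set α} (w : V) (hS0 : μ S ≠ 0)
    (hSfin : μ S ≠ ⊤) (hfi : IntegrableOn f S μ) :
    (‖Av μ f S - w‖₊ : ℝ≥0∞) ≤ (μ S)⁻¹ * ∫⁻ v in S, ‖f v - w‖₊ ∂μ := by
  rw [Av_sub_const w hS0 hSfin hfi]
  have h1 : (‖(μ S).toReal⁻¹‖₊ : ℝ≥0∞) = (μ S)⁻¹ := by
    rw [← enorm_eq_nnnorm, ← ofReal_norm, Real.norm_eq_abs,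
      abs_of_nonneg (by positivity), ENNReal.ofReal_inv_of_pos
        (ENNReal.toReal_pos hS0 hSfin), ENNReal.ofReal_toReal hSfin]
  calc (‖(μ S).toReal⁻¹ • ∫ u in S, (f u - w) ∂μ‖₊ : ℝ≥0∞)
      = (‖(μ S).toReal⁻¹‖₊ : ℝ≥0∞) * ‖∫ u in S, (f u - w) ∂μ‖₊ := by
        rw [nnnorm_smul]; push_cast; ring
    _ ≤ (μ S)⁻¹ * ∫⁻ v in S, ‖f v - w‖₊ ∂μ := by
        rw [h1]
        exact mul_le_mul_right (enorm_integral_le_lintegral_enorm _) _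

lemma ennnorm_Av_sub_Av {f : α → V} {S T : Set α} (hS0 : μ S ≠ 0) (hSfin : μ S ≠ ⊤)
    (hT0 : μ T ≠ 0) (hTfin : μ T ≠ ⊤) (hfiS : IntegrableOn f S μ)
    (hfiT : IntegrableOn f T μ) :
    (‖Av μ f S - Av μ f T‖₊ : ℝ≥0∞) ≤
      (μ S)⁻¹ * (μ T)⁻¹ * ∫⁻ u in S, ∫⁻ v in T, ‖f u - f v‖₊ ∂μ ∂μ := by
  calc (‖Av μ f S - Av μ f T‖₊ : ℝ≥0∞)
      ≤ (μ S)⁻¹ * ∫⁻ u in S, ‖f u - Av μ f T‖₊ ∂μ :=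
        ennnorm_Av_sub_const _ hS0 hSfin hfiS
    _ ≤ (μ S)⁻¹ * ∫⁻ u in S, ((μ T)⁻¹ * ∫⁻ v in T, ‖f u - f v‖₊ ∂μ) ∂μ := by
        refine mul_le_mul_right (lintegral_mono fun u => ?_) _
        have := ennnorm_Av_sub_const (f u) hT0 hTfin hfiT
        rw [← nnnorm_neg] at this
        simp only [neg_sub] at this
        calc (‖f u - Av μ f T‖₊ : ℝ≥0∞)
            ≤ (μ T)⁻¹ * ∫⁻ v in T, ‖f v - f u‖₊ ∂μ := this
          _ = (μ T)⁻¹ * ∫⁻ v in T, ‖f u - f v‖₊ ∂μ := by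
              congr 1; exact lintegral_congr fun v => by rw [← nnnorm_neg, neg_sub]
    _ = (μ S)⁻¹ * (μ T)⁻¹ * ∫⁻ u in S, ∫⁻ v in T, ‖f u - f v‖₊ ∂μ ∂μ := by
        rw [lintegral_const_mul' _ _ (by simp [hT0]), mul_assoc]


end Averages

section Holder
variable {α : Type*} [MeasurableSpace α] {μ : Measure α} [SFinite μ]
variable {V : Type*} [NormedAddCommGroup V] [NormedSpace ℝ V] [CompleteSpace V]
lemma lint_lint_holder {F : α → α → ℝ≥0∞} (hF : Measurable (Function.uncurry F))
    {p : ℝ} (hp : 1 ≤ p) {S T : Set α} (hSfin : μ S ≠ ⊤) (hTfin : μ T ≠ ⊤) :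
    ∫⁻ u in S, ∫⁻ v in T, F u v ∂μ ∂μ ≤
      (∫⁻ u in S, ∫⁻ v in T, F u v ^ p ∂μ ∂μ) ^ (1/p) * (μ S * μ T) ^ (1 - 1/p) := by
  have hp0 : p ≠ 0 := by linarith
  have hpexp : 0 ≤ 1 - 1/p := by
    have : 1/p ≤ 1 := by rw [div_le_one (by linarith)]; linarith
    linarith
  have hFp : Measurable (Function.uncurry fun u v => F u v ^ p) :=
    hF.pow measurable_const
  have hinner : Measurable fun u => ∫⁻ v in T, F u v ^ p ∂μ :=
    Measurable.lintegral_prod_right hFp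
  calc ∫⁻ u in S, ∫⁻ v in T, F u v ∂μ ∂μ
      ≤ ∫⁻ u in S, ((∫⁻ v in T, F u v ^ p ∂μ) ^ (1/p) * (μ T) ^ (1 - 1/p)) ∂μ := by
        refine lintegral_mono fun u => ?_
        have := lint_holder (μ := μ.restrict T)
          (hF.comp (measurable_prodMk_left : Measurable fun v => (u, v))).aemeasurable hp
        simpa [Measure.restrict_apply_univ] using this
    _ = (∫⁻ u in S, (∫⁻ v in T, F u v ^ p ∂μ) ^ (1/p) ∂μ) * (μ T) ^ (1 - 1/p) :=
        lintegral_mul_const' _ _ (by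
          exact ENNReal.rpow_ne_top_of_nonneg hpexp hTfin)
    _ ≤ ((∫⁻ u in S, ((∫⁻ v in T, F u v ^ p ∂μ) ^ (1/p)) ^ p ∂μ) ^ (1/p) *
          (μ S) ^ (1 - 1/p)) * (μ T) ^ (1 - 1/p) := by
        refine mul_le_mul_left ?_ _
        have := lint_holder (μ := μ.restrict S)
          ((hinner.pow (measurable_const (a := 1/p))).aemeasurable) hp
        simpa [Measure.restrict_apply_univ] using this
    _ = (∫⁻ u in S, ∫⁻ v in T, F u v ^ p ∂μ ∂μ) ^ (1/p) * (μ S * μ T) ^ (1 - 1/p) := by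
        rw [ENNReal.mul_rpow_of_nonneg _ _ hpexp, mul_assoc]
        congr 2
        refine lintegral_congr fun u => ?_
        rw [← ENNReal.rpow_mul, one_div_mul_cancel hp0, ENNReal.rpow_one]


end Holder

section Kernel
variable {X : Type*} [NormedAddCommGroup X] [MeasurableSpace X] {μ : Measure X} [SFinite μ]
variable {V : Type*} [NormedAddCommGroup V] [NormedSpace ℝ V] [CompleteSpace V]

variable {X : Type*} [NormedAddCommGroup X] [MeasurableSpace X] {μ : Measure X} [SFinite μ]
variable {V : Type*} [NormedAddCommGroup V] [NormedSpace ℝ V] [CompleteSpace V]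

omit [MeasurableSpace X] [SFinite μ] in
lemma kernel_pointwise {w : X} {z : V} {K m p : ℝ} (hm : 0 ≤ m) (hp : 0 < p)
    (hKd : ‖w‖ ≤ K) (hwz : w = 0 → z = 0) :
    (‖z‖₊ : ℝ≥0∞) ^ p ≤ ENNReal.ofReal K ^ m * ((‖z‖₊ : ℝ≥0∞) ^ p / (‖w‖₊ : ℝ≥0∞) ^ m) := by
  by_cases hw : w = 0
  · rw [hwz hw]
    simp [ENNReal.zero_rpow_of_pos hp]
  · have hw0 : (0:ℝ≥0∞) < (‖w‖₊ : ℝ≥0∞) := by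
      simpa [pos_iff_ne_zero] using nnnorm_ne_zero_iff.2 hw
    have hD0 : (‖w‖₊ : ℝ≥0∞) ^ m ≠ 0 := (ENNReal.rpow_pos hw0 ENNReal.coe_ne_top).ne'
    have hDtop : (‖w‖₊ : ℝ≥0∞) ^ m ≠ ⊤ := ENNReal.rpow_ne_top_of_nonneg hm ENNReal.coe_ne_top
    have hDK : (‖w‖₊ : ℝ≥0∞) ^ m ≤ ENNReal.ofReal K ^ m := by
      refine ENNReal.rpow_le_rpow ?_ hm
      rw [← enorm_eq_nnnorm, ← ofReal_norm]
      exact ENNReal.ofReal_le_ofReal hKd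
    calc (‖z‖₊ : ℝ≥0∞) ^ p
        = (‖z‖₊ : ℝ≥0∞) ^ p / (‖w‖₊ : ℝ≥0∞) ^ m * (‖w‖₊ : ℝ≥0∞) ^ m :=
          (ENNReal.div_mul_cancel hD0 hDtop).symm
      _ ≤ (‖z‖₊ : ℝ≥0∞) ^ p / (‖w‖₊ : ℝ≥0∞) ^ m * ENNReal.ofReal K ^ m :=
          mul_le_mul_right hDK _
      _ = ENNReal.ofReal K ^ m * ((‖z‖₊ : ℝ≥0∞) ^ p / (‖w‖₊ : ℝ≥0∞) ^ m) := mul_comm _ _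

omit [SFinite μ] in
lemma kernel_bound {f : X → V} {S T Q : Set X} (hSm : MeasurableSet S) (hTm : MeasurableSet T)
    (hSQ : S ⊆ Q) (hTQ : T ⊆ Q) {K m p : ℝ} (hm : 0 ≤ m) (hp : 0 < p)
    (hK : ∀ u ∈ S, ∀ v ∈ T, ‖u - v‖ ≤ K) :
    ∫⁻ u in S, ∫⁻ v in T, (‖f u - f v‖₊ : ℝ≥0∞) ^ p ∂μ ∂μ ≤
      ENNReal.ofReal K ^ m *
        ∫⁻ u in Q, ∫⁻ v in Q, (‖f u - f v‖₊ : ℝ≥0∞) ^ p / (‖u - v‖₊ : ℝ≥0∞) ^ m ∂μ ∂μ := by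
  have hKtop : ENNReal.ofReal K ^ m ≠ ⊤ :=
    ENNReal.rpow_ne_top_of_nonneg hm ENNReal.ofReal_ne_top
  calc ∫⁻ u in S, ∫⁻ v in T, (‖f u - f v‖₊ : ℝ≥0∞) ^ p ∂μ ∂μ
      ≤ ∫⁻ u in S, ∫⁻ v in T,
          ENNReal.ofReal K ^ m *
            ((‖f u - f v‖₊ : ℝ≥0∞) ^ p / (‖u - v‖₊ : ℝ≥0∞) ^ m) ∂μ ∂μ := by
        refine setLIntegral_mono' hSm fun u hu => ?_
        refine setLIntegral_mono' hTm fun v hv => ?_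
        exact kernel_pointwise hm hp (hK u hu v hv) (fun h => by
          rw [sub_eq_zero] at h; rw [h, sub_self])
    _ = ENNReal.ofReal K ^ m *
          ∫⁻ u in S, ∫⁻ v in T, (‖f u - f v‖₊ : ℝ≥0∞) ^ p / (‖u - v‖₊ : ℝ≥0∞) ^ m ∂μ ∂μ := by
        rw [← lintegral_const_mul' _ _ hKtop]
        exact lintegral_congr fun u => lintegral_const_mul' _ _ hKtop
    _ ≤ ENNReal.ofReal K ^ m *
          ∫⁻ u in Q, ∫⁻ v in Q, (‖f u - f v‖₊ : ℝ≥0∞) ^ p / (‖u - v‖₊ : ℝ≥0∞) ^ m ∂μ ∂μ := by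
        refine mul_le_mul_right ?_ _
        calc ∫⁻ u in S, ∫⁻ v in T, (‖f u - f v‖₊ : ℝ≥0∞) ^ p / (‖u - v‖₊ : ℝ≥0∞) ^ m ∂μ ∂μ
            ≤ ∫⁻ u in S, ∫⁻ v in Q, (‖f u - f v‖₊ : ℝ≥0∞) ^ p / (‖u - v‖₊ : ℝ≥0∞) ^ m ∂μ ∂μ :=
              lintegral_mono fun u => lintegral_mono_set hTQ
          _ ≤ _ := lintegral_mono_set hSQ

lemma avg_master {X : Type*} [NormedAddCommGroup X] [MeasurableSpace X] {μ : Measure X}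
    [SFinite μ] {f : X → V} (hfm : StronglyMeasurable f) {S T Q : Set X}
    (hSm : MeasurableSet S) (hTm : MeasurableSet T) (hSQ : S ⊆ Q) (hTQ : T ⊆ Q)
    (hfiS : IntegrableOn f S μ) (hfiT : IntegrableOn f T μ)
    {s t K m p : ℝ} (hp : 1 ≤ p) (hm : 0 ≤ m) (hs : 0 < s) (ht : 0 < t)
    (hsS : ENNReal.ofReal s ≤ μ S) (htT : ENNReal.ofReal t ≤ μ T)
    (hSfin : μ S ≠ ⊤) (hTfin : μ T ≠ ⊤)
    (hdist : ∀ u ∈ S, ∀ v ∈ T, ‖u - v‖ ≤ K) :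
    (‖Av μ f S - Av μ f T‖₊ : ℝ≥0∞) ≤
      (ENNReal.ofReal K ^ m * (ENNReal.ofReal s * ENNReal.ofReal t)⁻¹) ^ (1/p) *
        (∫⁻ u in Q, ∫⁻ v in Q,
          (‖f u - f v‖₊ : ℝ≥0∞) ^ p / (‖u - v‖₊ : ℝ≥0∞) ^ m ∂μ ∂μ) ^ (1/p) := by
  have hp0 : (0:ℝ) < p := by linarith
  have hp1 : (0:ℝ) ≤ 1/p := by positivity
  have hS0 : μ S ≠ 0 :=
    (lt_of_lt_of_le (by simp [hs] : (0:ℝ≥0∞) < ENNReal.ofReal s) hsS).ne'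
  have hT0 : μ T ≠ 0 :=
    (lt_of_lt_of_le (by simp [ht] : (0:ℝ≥0∞) < ENNReal.ofReal t) htT).ne'
  have hK0 : (0:ℝ) ≤ K := by
    obtain ⟨u, hu⟩ := nonempty_of_measure_ne_zero hS0
    obtain ⟨v, hv⟩ := nonempty_of_measure_ne_zero hT0
    exact le_trans (norm_nonneg _) (hdist u hu v hv)
  have hF : Measurable (Function.uncurry fun u v => (‖f u - f v‖₊ : ℝ≥0∞)) :=
    ((hfm.comp_measurable measurable_fst).sub (hfm.comp_measurable measurable_snd)).enorm
  set A := ∫⁻ u in Q, ∫⁻ v in Q,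
    (‖f u - f v‖₊ : ℝ≥0∞) ^ p / (‖u - v‖₊ : ℝ≥0∞) ^ m ∂μ ∂μ with hA
  set x := μ S * μ T with hx
  have hx0 : x ≠ 0 := mul_ne_zero hS0 hT0
  have hxtop : x ≠ ⊤ := ENNReal.mul_ne_top hSfin hTfin
  have hrearr : (μ S)⁻¹ * (μ T)⁻¹ * ((ENNReal.ofReal K ^ m * A) ^ (1/p) * x ^ (1 - 1/p))
      = x ^ (-(1/p)) * (ENNReal.ofReal K ^ m * A) ^ (1/p) := by
    rw [← ENNReal.mul_inv (Or.inl hS0) (Or.inr hT0)]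
    rw [← hx, ← ENNReal.rpow_neg_one x]
    rw [mul_comm ((ENNReal.ofReal K ^ m * A) ^ (1/p)), ← mul_assoc,
      ← ENNReal.rpow_add _ _ hx0 hxtop]
    norm_num
    ring_nf
  calc (‖Av μ f S - Av μ f T‖₊ : ℝ≥0∞)
      ≤ (μ S)⁻¹ * (μ T)⁻¹ * ∫⁻ u in S, ∫⁻ v in T, ‖f u - f v‖₊ ∂μ ∂μ :=
        ennnorm_Av_sub_Av hS0 hSfin hT0 hTfin hfiS hfiT
    _ ≤ (μ S)⁻¹ * (μ T)⁻¹ *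
          ((∫⁻ u in S, ∫⁻ v in T, (‖f u - f v‖₊ : ℝ≥0∞) ^ p ∂μ ∂μ) ^ (1/p) * x ^ (1 - 1/p)) :=
        mul_le_mul_right (lint_lint_holder hF hp hSfin hTfin) _
    _ ≤ (μ S)⁻¹ * (μ T)⁻¹ * ((ENNReal.ofReal K ^ m * A) ^ (1/p) * x ^ (1 - 1/p)) := by
        refine mul_le_mul_right (mul_le_mul_left (ENNReal.rpow_le_rpow ?_ hp1) _) _
        exact kernel_bound hSm hTm hSQ hTQ hm hp0 hdist
    _ = x ^ (-(1/p)) * (ENNReal.ofReal K ^ m * A) ^ (1/p) := hrearr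
    _ ≤ (ENNReal.ofReal s * ENNReal.ofReal t) ^ (-(1/p)) *
          (ENNReal.ofReal K ^ m * A) ^ (1/p) := by
        refine mul_le_mul_left ?_ _
        rw [ENNReal.rpow_neg, ENNReal.rpow_neg]
        exact ENNReal.inv_le_inv.2 (ENNReal.rpow_le_rpow (mul_le_mul' hsS htT) hp1)
    _ = (ENNReal.ofReal K ^ m * (ENNReal.ofReal s * ENNReal.ofReal t)⁻¹) ^ (1/p) * A ^ (1/p) := by
        rw [ENNReal.mul_rpow_of_nonneg _ _ hp1, ENNReal.mul_rpow_of_nonneg _ _ hp1,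
          ENNReal.inv_rpow, ← ENNReal.rpow_neg]
        ring


end Kernel



lemma real_prefac (d : ℕ) {m p δ ρ κ lam τ : ℝ} (hp : 0 < p) (hρ : 0 < ρ) (hκ : 0 < κ)
    (hlam : 0 < lam) (hτ : 0 < τ) (hm : m = 2*d + δ*p) :
    ((lam*ρ)^m / (κ*ρ^(d:ℕ) * (κ*(τ*ρ)^(d:ℕ))))^(1/p)
      = (lam^m / (κ^2 * τ^(d:ℕ)))^(1/p) * ρ^δ := by
  have h1 : (lam*ρ)^m = lam^m * ρ^m := Real.mul_rpow hlam.le hρ.le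
  have h2 : κ*ρ^(d:ℕ) * (κ*(τ*ρ)^(d:ℕ)) = (κ^2*τ^(d:ℕ)) * (ρ^(d:ℕ) * ρ^(d:ℕ)) := by
    rw [mul_pow]; ring
  have h3 : (ρ^(d:ℕ) * ρ^(d:ℕ) : ℝ) = ρ^((2*d : ℝ)) := by
    rw [← pow_add, ← Real.rpow_natCast ρ (d+d)]
    congr 1
    push_cast
    ring
  have hden : (0:ℝ) < κ^2*τ^(d:ℕ) := by positivity
  rw [h1, h2, h3]
  have hsub : ρ^m / ρ^((2*d:ℝ)) = ρ^(δ*p) := by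
    rw [← Real.rpow_sub hρ]
    congr 1
    rw [hm]; ring
  have h4 : lam^m * ρ^m / (κ^2*τ^(d:ℕ) * ρ^((2*d:ℝ)))
      = (lam^m / (κ^2*τ^(d:ℕ))) * ρ^(δ*p) := by
    rw [mul_div_mul_comm, hsub]
  rw [h4, Real.mul_rpow (by positivity) (by positivity), ← Real.rpow_mul hρ.le]
  congr 1
  field_simp

lemma real_prefac2 (d : ℕ) {m p δ ρ κ : ℝ} (hp : 0 < p) (hρ : 0 < ρ) (hκ : 0 < κ)
    (hm : m = 2*d + δ*p) :
    (ρ^m / (κ*ρ^(d:ℕ)))^(1/p) = (κ⁻¹)^(1/p) * ρ^((d + δ*p)/p) := by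
  have h3 : (ρ^(d:ℕ) : ℝ) = ρ^((d:ℝ)) := (Real.rpow_natCast ρ d).symm
  rw [h3]
  have hsub : ρ^m / ρ^((d:ℝ)) = ρ^((d:ℝ) + δ*p) := by
    rw [← Real.rpow_sub hρ]
    congr 1
    rw [hm]; ring
  have h4 : ρ^m / (κ*ρ^((d:ℝ))) = κ⁻¹ * ρ^((d:ℝ) + δ*p) := by
    rw [← hsub]
    field_simp
  rw [h4, Real.mul_rpow (by positivity) (by positivity), ← Real.rpow_mul hρ.le]
  congr 1
  ring

lemma ennreal_prefac {K s t p : ℝ} {m : ℝ} (hK : 0 < K) (hs : 0 < s) (ht : 0 < t)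
    (hp : 0 < p) :
    (ENNReal.ofReal K ^ m * (ENNReal.ofReal s * ENNReal.ofReal t)⁻¹) ^ (1/p)
      = ENNReal.ofReal ((K^m / (s*t))^(1/p)) := by
  rw [ENNReal.ofReal_rpow_of_pos hK, ← ENNReal.ofReal_mul hs.le,
    ← ENNReal.ofReal_inv_of_pos (by positivity),
    ← ENNReal.ofReal_mul (by positivity),
    ENNReal.ofReal_rpow_of_pos (by positivity), div_eq_mul_inv]
  congr 1

lemma inv_mul_rpow_aux {x B : ℝ≥0∞} (hx0 : x ≠ 0) (hxt : x ≠ ⊤) {p : ℝ} :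
    x⁻¹ * ((B : ℝ≥0∞) * x^(1-1/p)) = x^(-(1/p)) * B := by
  rw [← ENNReal.rpow_neg_one x, mul_comm B, ← mul_assoc,
    ← ENNReal.rpow_add _ _ hx0 hxt]
  have : (-1 + (1 - 1/p)) = -(1/p) := by ring
  rw [this]


lemma ennreal_prefac2 {s K p m : ℝ} (hK : 0 < K) (hs : 0 < s) (hp : 0 < p) :
    (ENNReal.ofReal s)^(-(1/p)) * (ENNReal.ofReal K ^ m)^(1/p)
      = ENNReal.ofReal ((K^m/s)^(1/p)) := by
  have h1 : (ENNReal.ofReal s)^(-(1/p)) = ENNReal.ofReal ((s^(1/p))⁻¹) := by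
    rw [ENNReal.rpow_neg, ENNReal.ofReal_rpow_of_pos hs,
      ← ENNReal.ofReal_inv_of_pos (Real.rpow_pos_of_pos hs _)]
  have h2 : (ENNReal.ofReal K ^ m)^(1/p) = ENNReal.ofReal ((K^m)^(1/p)) := by
    rw [ENNReal.ofReal_rpow_of_pos hK, ENNReal.ofReal_rpow_of_pos (Real.rpow_pos_of_pos hK m)]
  rw [h1, h2, ← ENNReal.ofReal_mul (by positivity)]
  congr 1
  rw [Real.div_rpow (Real.rpow_nonneg hK.le m) hs.le]
  ring

lemma dist_of_ennreal {V : Type*} [NormedAddCommGroup V] {u v : V} {C : ℝ} {Z : ℝ≥0∞}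
    (hC : 0 ≤ C) (hZ : Z ≠ ⊤) (h : (‖u - v‖₊ : ℝ≥0∞) ≤ ENNReal.ofReal C * Z) :
    dist u v ≤ C * Z.toReal := by
  have h2 := ENNReal.toReal_mono (ENNReal.mul_ne_top ENNReal.ofReal_ne_top hZ) h
  rw [ENNReal.toReal_mul, ENNReal.toReal_ofReal hC] at h2
  simpa [dist_eq_norm] using h2

lemma rpow_neg_antitone {x y : ℝ≥0∞} {e : ℝ} (he : 0 ≤ e) (hxy : x ≤ y) :
    y^(-e) ≤ x^(-e) := by
  rw [ENNReal.rpow_neg, ENNReal.rpow_neg]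
  exact ENNReal.inv_le_inv.2 (ENNReal.rpow_le_rpow hxy he)



noncomputable def kap (d : ℕ) : ℝ := ((2*Real.sqrt d)⁻¹)^d
noncomputable def mm (d : ℕ) (p δ : ℝ) : ℝ := 2*(d:ℝ) + δ*p
noncomputable def qq (δ : ℝ) : ℝ := (((2:ℝ)^δ))⁻¹
noncomputable def CC1 (d : ℕ) (p δ : ℝ) : ℝ :=
  ((2:ℝ)^(mm d p δ) / ((kap d)^2 * (1/2:ℝ)^d))^(1/p)
noncomputable def CC2 (d : ℕ) (p δ : ℝ) : ℝ :=
  ((3:ℝ)^(mm d p δ) / ((kap d)^2 * (1:ℝ)^d))^(1/p)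
noncomputable def NC (d : ℕ) (p δ : ℝ) : ℝ :=
  max 1 (max (2*(2*(CC1 d p δ)/(1-qq δ) + CC2 d p δ))
    (CC1 d p δ * (Real.sqrt d)^δ / (1-qq δ)))

lemma kap_pos {d : ℕ} (hd : 1 ≤ d) : 0 < kap d := by
  have : (0:ℝ) < Real.sqrt d := Real.sqrt_pos.2 (by exact_mod_cast hd)
  unfold kap; positivity

lemma qq_pos {δ : ℝ} : 0 < qq δ := by unfold qq; positivity

lemma qq_lt_one {δ : ℝ} (hδ : 0 < δ) : qq δ < 1 := by
  unfold qq
  rw [inv_lt_one_iff₀]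
  right
  exact Real.one_lt_rpow_iff_of_pos (by norm_num) |>.2 (Or.inl ⟨one_lt_two, hδ⟩)

lemma CC1_pos {d : ℕ} (hd : 1 ≤ d) {p δ : ℝ} : 0 < CC1 d p δ := by
  have := kap_pos hd; unfold CC1; positivity

lemma CC2_pos {d : ℕ} (hd : 1 ≤ d) {p δ : ℝ} : 0 < CC2 d p δ := by
  have := kap_pos hd; unfold CC2; positivity

lemma NC_pos {d : ℕ} {p δ : ℝ} : 0 < NC d p δ := lt_of_lt_of_le one_pos (le_max_left _ _)

lemma exists_scale {R r : ℝ} (hR : 0 < R) (hr : 0 < r) (hrR : r < R) :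
    ∃ n : ℕ, r ≤ R/2^n ∧ R/2^n < 2*r := by
  have hex : ∃ n : ℕ, R/2^n < 2*r := by
    obtain ⟨n0, hn0⟩ := pow_unbounded_of_one_lt (R/(2*r)) (one_lt_two (α := ℝ))
    refine ⟨n0, ?_⟩
    rw [div_lt_iff₀ (by positivity)]
    rw [div_lt_iff₀ (by positivity)] at hn0
    linarith
  refine ⟨Nat.find hex, ?_, Nat.find_spec hex⟩
  rcases Nat.eq_zero_or_pos (Nat.find hex) with h0 | hpos
  · rw [h0]; simpa using hrR.le
  · obtain ⟨k, hk⟩ := Nat.exists_eq_succ_of_ne_zero hpos.ne'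
    have hnot : ¬ (R/2^k < 2*r) := Nat.find_min hex (by omega)
    push_neg at hnot
    rw [hk, pow_succ, ← div_div]
    linarith

universe u

lemma main {d : ℕ} (hd : 1 ≤ d) {p δ : ℝ} (hp : 1 ≤ p) (hδ0 : 0 < δ) (hδ1 : δ ≤ 1)
    {V : Type u} [NormedAddCommGroup V] [NormedSpace ℝ V] [CompleteSpace V]
    (a : EuclideanSpace ℝ (Fin d)) {c : ℝ} (hc : 0 < c)
    {f : EuclideanSpace ℝ (Fin d) → V} (hfm : StronglyMeasurable f)
    (hfi : IntegrableOn f (box a c) volume)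
    (hA : (∫⁻ x in box a c, ∫⁻ y in box a c,
        (‖f x - f y‖₊ : ℝ≥0∞) ^ p / (‖x - y‖₊ : ℝ≥0∞) ^ (mm d p δ)
        ∂volume ∂volume) ≠ ⊤) :
    ∃ g : EuclideanSpace ℝ (Fin d) → V,
      (∀ᵐ x ∂volume.restrict (box a c), g x = f x) ∧
      ContinuousOn g (box a c) ∧
      (∀ x ∈ box a c, ∀ y ∈ box a c,
        (‖g x - g y‖₊ : ℝ≥0∞) ≤
          ENNReal.ofReal (NC d p δ) *
            (∫⁻ x' in box a c, ∫⁻ y' in box a c,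
              (‖f x' - f y'‖₊ : ℝ≥0∞) ^ p / (‖x' - y'‖₊ : ℝ≥0∞) ^ (mm d p δ)
              ∂volume ∂volume) ^ (1/p) * (‖x - y‖₊ : ℝ≥0∞) ^ δ) ∧
      (∀ x ∈ box a c,
        (‖g x‖₊ : ℝ≥0∞) ≤
          ENNReal.ofReal (NC d p δ) * volume (box a c) ^ (δ/(d:ℝ)) *
            (∫⁻ x' in box a c, ∫⁻ y' in box a c,
              (‖f x' - f y'‖₊ : ℝ≥0∞) ^ p / (‖x' - y'‖₊ : ℝ≥0∞) ^ (mm d p δ)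
              ∂volume ∂volume) ^ (1/p) +
          volume (box a c) ^ (-(1/p)) *
            (∫⁻ x' in box a c, (‖f x'‖₊ : ℝ≥0∞) ^ p ∂volume) ^ (1/p)) := by
  -- basic positivity facts
  have hp0 : (0:ℝ) < p := by linarith
  have h1p : (0:ℝ) ≤ 1/p := by positivity
  have hsd : (0:ℝ) < Real.sqrt d := Real.sqrt_pos.2 (by exact_mod_cast hd)
  have hκ : 0 < kap d := kap_pos hd
  have hm0 : (0:ℝ) ≤ mm d p δ := by unfold mm; positivity
  have hq0 : 0 < qq δ := qq_pos
  have hq1 : qq δ < 1 := qq_lt_one hδ0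
  set Q : Set (EuclideanSpace ℝ (Fin d)) := box a c with hQdef
  set m : ℝ := mm d p δ with hmdef
  set A : ℝ≥0∞ := ∫⁻ x in Q, ∫⁻ y in Q,
    (‖f x - f y‖₊ : ℝ≥0∞) ^ p / (‖x - y‖₊ : ℝ≥0∞) ^ m ∂volume ∂volume with hAdef
  set R : ℝ := c * Real.sqrt d with hRdef
  have hR : 0 < R := by positivity
  set ρ : ℕ → ℝ := fun n => R / 2^n with hρdef
  have hρpos : ∀ n, 0 < ρ n := fun n => by positivity
  have hρle : ∀ n, ρ n ≤ R := fun n => by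
    rw [hρdef]
    calc R / 2^n ≤ R / 1 := by
          apply div_le_div_of_nonneg_left hR.le one_pos
          exact one_le_pow₀ one_le_two
      _ = R := div_one R
  have hρsucc : ∀ n, ρ (n+1) = (1/2) * ρ n := fun n => by
    show R / 2^(n+1) = 1/2 * (R / 2^n)
    rw [pow_succ]; ring
  -- measure of Q
  have hQmeas : MeasurableSet Q := measurableSet_box a c
  have hQvol : volume Q = ENNReal.ofReal c ^ d := volume_box a c
  have hQ0 : volume Q ≠ 0 := by
    rw [hQvol]
    exact pow_ne_zero d (by simp [hc])
  have hQfin : volume Q ≠ ⊤ := by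
    rw [hQvol]
    exact ENNReal.pow_ne_top ENNReal.ofReal_ne_top
  -- the sets E x n and their properties
  set E : EuclideanSpace ℝ (Fin d) → ℕ → Set (EuclideanSpace ℝ (Fin d)) :=
    fun x n => Q ∩ Metric.ball x (ρ n) with hEdef
  have hEmeas : ∀ x n, MeasurableSet (E x n) := fun x n =>
    hQmeas.inter measurableSet_ball
  have hEsub : ∀ x n, E x n ⊆ Q := fun x n => Set.inter_subset_left
  have hEvol : ∀ x ∈ Q, ∀ n, ENNReal.ofReal (kap d * ρ n ^ (d:ℕ)) ≤ volume (E x n) := by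
    intro x hx n
    have hρR : ρ n ≤ c * Real.sqrt d := by rw [← hRdef]; exact hρle n
    have h := volume_inter_ball_ge hd hc hx (hρpos n) hρR
    have heq : (ρ n / (2*Real.sqrt d))^(d:ℕ) = kap d * ρ n ^ (d:ℕ) := by
      rw [div_eq_mul_inv, mul_pow, kap, mul_comm]
    exact heq ▸ h
  have hEfin : ∀ x n, volume (E x n) ≠ ⊤ := fun x n =>
    (lt_of_le_of_lt (measure_mono (hEsub x n)) (lt_top_iff_ne_top.2 hQfin)).ne
  have hE0 : ∀ x ∈ Q, ∀ n, volume (E x n) ≠ 0 := by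
    intro x hx n
    refine fun h => ?_
    have := hEvol x hx n
    rw [h, le_zero_iff, ENNReal.ofReal_eq_zero] at this
    nlinarith [pow_pos (hρpos n) (d:ℕ), this]
  have hEint : ∀ x n, IntegrableOn f (E x n) volume := fun x n =>
    hfi.mono_set (hEsub x n)
  -- averages and the basic Cauchy estimate
  set av : EuclideanSpace ℝ (Fin d) → ℕ → V := fun x n => Av volume f (E x n) with havdef
  set B : ℝ := (A ^ (1/p)).toReal with hBdef
  have hB0 : 0 ≤ B := ENNReal.toReal_nonneg
  have hAp_ne_top : A ^ (1/p) ≠ ⊤ := ENNReal.rpow_ne_top_of_nonneg h1p hA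
  have hofB : ENNReal.ofReal B = A ^ (1/p) := ENNReal.ofReal_toReal hAp_ne_top
  have hmm : m = 2*(d:ℝ) + δ*p := by rw [hmdef, mm]
  have step1 : ∀ x ∈ Q, ∀ n, dist (av x n) (av x (n+1)) ≤ (CC1 d p δ * ρ n ^ δ) * B := by
    intro x hx n
    have hKpos : (0:ℝ) < 2 * ρ n := by positivity
    have hdista : ∀ u ∈ E x n, ∀ v ∈ E x (n+1), ‖u - v‖ ≤ 2 * ρ n := by
      intro u hu v hv
      have h1 : dist u x < ρ n := Metric.mem_ball.1 hu.2
      have h2 : dist v x < ρ (n+1) := Metric.mem_ball.1 hv.2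
      have h3 : ρ (n+1) ≤ ρ n := by rw [hρsucc n]; linarith [hρpos n]
      calc ‖u - v‖ = dist u v := (dist_eq_norm u v).symm
        _ ≤ dist u x + dist x v := dist_triangle _ _ _
        _ ≤ ρ n + ρ (n+1) := by rw [dist_comm x v]; exact add_le_add h1.le h2.le
        _ ≤ 2 * ρ n := by linarith
    have hmas := avg_master (μ := volume) hfm (hEmeas x n) (hEmeas x (n+1))
      (hEsub x n) (hEsub x (n+1)) (hEint x n) (hEint x (n+1)) hp hm0
      (s := kap d * ρ n ^ (d:ℕ)) (t := kap d * ((1/2) * ρ n) ^ (d:ℕ))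
      (mul_pos hκ (pow_pos (hρpos n) d))
      (mul_pos hκ (pow_pos (by positivity : (0:ℝ) < (1/2) * ρ n) d))
      (hEvol x hx n) (by rw [← hρsucc n]; exact hEvol x hx (n+1))
      (hEfin x n) (hEfin x (n+1)) hdista
    rw [ennreal_prefac hKpos (mul_pos hκ (pow_pos (hρpos n) d))
        (mul_pos hκ (pow_pos (by positivity : (0:ℝ) < (1/2) * ρ n) d)) hp0,
      real_prefac d hp0 (hρpos n) hκ two_pos (by norm_num : (0:ℝ) < 1/2) hmm] at hmas
    exact dist_of_ennreal (C := CC1 d p δ * ρ n ^ δ) (Z := A ^ (1/p))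
      (mul_nonneg (CC1_pos hd).le (Real.rpow_nonneg (hρpos n).le δ)) hAp_ne_top
      (by rw [CC1, ← hmdef]; exact hmas)
  have hgeoms : ∀ (e : ℝ) (n : ℕ), ρ n ^ e = R^e * (((2:ℝ)^e)⁻¹)^n := by
    intro e n
    show (R / 2^n) ^ e = _
    rw [Real.div_rpow hR.le (by positivity), inv_pow, div_eq_mul_inv]
    congr 2
    rw [← Real.rpow_natCast (2:ℝ) n, ← Real.rpow_mul (by norm_num), mul_comm,
      Real.rpow_mul (by norm_num), Real.rpow_natCast]
  have hgeom : ∀ n, ρ n ^ δ = R^δ * qq δ ^ n := by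
    intro n
    rw [hgeoms δ n, qq]
  have step2 : ∀ x ∈ Q, ∀ n,
      dist (av x n) (av x (n+1)) ≤ (CC1 d p δ * R^δ * B) * qq δ ^ n := by
    intro x hx n
    calc dist (av x n) (av x (n+1)) ≤ (CC1 d p δ * ρ n ^ δ) * B := step1 x hx n
      _ = (CC1 d p δ * R^δ * B) * qq δ ^ n := by rw [hgeom n]; ring
  have hcauchy : ∀ x ∈ Q, CauchySeq (av x) := fun x hx =>
    cauchySeq_of_le_geometric (qq δ) _ hq1 (step2 x hx)
  set g : EuclideanSpace ℝ (Fin d) → V := fun x => Filter.limUnder Filter.atTop (av x)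
    with hgdef
  have htend : ∀ x ∈ Q, Filter.Tendsto (av x) Filter.atTop (nhds (g x)) := by
    intro x hx
    obtain ⟨l, hl⟩ := cauchySeq_tendsto_of_complete (hcauchy x hx)
    have hgl : g x = l := hl.limUnder_eq
    rw [hgl]; exact hl
  have htail : ∀ x ∈ Q, ∀ n,
      dist (av x n) (g x) ≤ (CC1 d p δ * R^δ * B) * qq δ ^ n / (1 - qq δ) :=
    fun x hx n => dist_le_of_le_geometric_of_tendsto (qq δ) _ hq1 (step2 x hx)
      (htend x hx) n
  -- middle estimate at matched scale
  have step3 : ∀ x ∈ Q, ∀ y ∈ Q, ∀ n, dist x y ≤ ρ n →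
      dist (av x n) (av y n) ≤ (CC2 d p δ * ρ n ^ δ) * B := by
    intro x hx y hy n hr
    have hKpos : (0:ℝ) < 3 * ρ n := by positivity
    have hdista : ∀ u ∈ E x n, ∀ v ∈ E y n, ‖u - v‖ ≤ 3 * ρ n := by
      intro u hu v hv
      have h1 : dist u x < ρ n := Metric.mem_ball.1 hu.2
      have h2 : dist v y < ρ n := Metric.mem_ball.1 hv.2
      calc ‖u - v‖ = dist u v := (dist_eq_norm u v).symm
        _ ≤ dist u x + dist x y + dist y v := dist_triangle4 u x y v
        _ ≤ ρ n + ρ n + ρ n := by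
            rw [dist_comm y v]; exact add_le_add (add_le_add h1.le hr) h2.le
        _ = 3 * ρ n := by ring
    have hmas := avg_master (μ := volume) hfm (hEmeas x n) (hEmeas y n)
      (hEsub x n) (hEsub y n) (hEint x n) (hEint y n) hp hm0
      (s := kap d * ρ n ^ (d:ℕ)) (t := kap d * ((1:ℝ) * ρ n) ^ (d:ℕ))
      (mul_pos hκ (pow_pos (hρpos n) d))
      (mul_pos hκ (pow_pos (by positivity : (0:ℝ) < (1:ℝ) * ρ n) d))
      (hEvol x hx n) (by rw [one_mul]; exact hEvol y hy n)
      (hEfin x n) (hEfin y n) hdista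
    rw [ennreal_prefac hKpos (mul_pos hκ (pow_pos (hρpos n) d))
        (mul_pos hκ (pow_pos (by positivity : (0:ℝ) < (1:ℝ) * ρ n) d)) hp0,
      real_prefac d hp0 (hρpos n) hκ three_pos one_pos hmm] at hmas
    exact dist_of_ennreal (C := CC2 d p δ * ρ n ^ δ) (Z := A ^ (1/p))
      (mul_nonneg (CC2_pos hd).le (Real.rpow_nonneg (hρpos n).le δ)) hAp_ne_top
      (by rw [CC2, ← hmdef]; exact hmas)
  -- real Hölder estimate for g
  have hN1 : 2*(2*(CC1 d p δ)/(1-qq δ) + CC2 d p δ) ≤ NC d p δ :=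
    le_trans (le_max_left _ _) (le_max_right _ _)
  have hN2 : CC1 d p δ * (Real.sqrt d)^δ / (1-qq δ) ≤ NC d p δ :=
    le_trans (le_max_right _ _) (le_max_right _ _)
  have hN0 : (0:ℝ) < NC d p δ := NC_pos
  have holderR : ∀ x ∈ Q, ∀ y ∈ Q, x ≠ y →
      dist (g x) (g y) ≤ NC d p δ * B * dist x y ^ δ := by
    intro x hx y hy hxy
    have hr0 : 0 < dist x y := dist_pos.2 hxy
    have hrR : dist x y < R := dist_lt_of_mem_box hd hc hx hy
    obtain ⟨n, hn1, hn2⟩ := exists_scale hR hr0 hrR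
    have hρn1 : dist x y ≤ ρ n := hn1
    have hρn2 : ρ n < 2 * dist x y := hn2
    have key3 := step3 x hx y hy n hρn1
    have t1 := htail x hx n
    have t2 := htail y hy n
    have hgq : (CC1 d p δ * R^δ * B) * qq δ ^ n = CC1 d p δ * (ρ n ^ δ) * B := by
      rw [hgeom n]; ring
    rw [hgq] at t1 t2
    have h1q : 0 < 1 - qq δ := by linarith
    -- the tail bounds divided by (1 - qq δ)
    have t1' : dist (av x n) (g x) ≤ CC1 d p δ / (1 - qq δ) * (ρ n ^ δ) * B := by
      calc dist (av x n) (g x) ≤ CC1 d p δ * (ρ n ^ δ) * B / (1 - qq δ) := t1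
        _ = CC1 d p δ / (1 - qq δ) * (ρ n ^ δ) * B := by ring
    have t2' : dist (av y n) (g y) ≤ CC1 d p δ / (1 - qq δ) * (ρ n ^ δ) * B := by
      calc dist (av y n) (g y) ≤ CC1 d p δ * (ρ n ^ δ) * B / (1 - qq δ) := t2
        _ = CC1 d p δ / (1 - qq δ) * (ρ n ^ δ) * B := by ring
    have hρδ : ρ n ^ δ ≤ 2 * dist x y ^ δ := by
      calc ρ n ^ δ ≤ (2 * dist x y) ^ δ :=
            Real.rpow_le_rpow (hρpos n).le hρn2.le hδ0.le
        _ = 2^δ * dist x y ^ δ := Real.mul_rpow (by norm_num) hr0.le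
        _ ≤ 2 * dist x y ^ δ := by
            have h2δ : (2:ℝ)^δ ≤ 2^(1:ℝ) :=
              Real.rpow_le_rpow_of_exponent_le one_le_two hδ1
            rw [Real.rpow_one] at h2δ
            have := Real.rpow_nonneg hr0.le δ
            nlinarith
    have hCsum : 0 ≤ 2 * (CC1 d p δ / (1 - qq δ)) + CC2 d p δ := by
      have := (CC1_pos hd (p := p) (δ := δ)).le
      have := (CC2_pos hd (p := p) (δ := δ)).le
      positivity
    calc dist (g x) (g y)
        ≤ dist (g x) (av x n) + dist (av x n) (av y n) + dist (av y n) (g y) :=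
          dist_triangle4 _ _ _ _
      _ ≤ CC1 d p δ / (1 - qq δ) * (ρ n ^ δ) * B + CC2 d p δ * (ρ n ^ δ) * B
            + CC1 d p δ / (1 - qq δ) * (ρ n ^ δ) * B := by
          rw [dist_comm (g x) (av x n)]
          exact add_le_add (add_le_add t1' key3) t2'
      _ = (2 * (CC1 d p δ / (1 - qq δ)) + CC2 d p δ) * (ρ n ^ δ) * B := by ring
      _ ≤ (2 * (CC1 d p δ / (1 - qq δ)) + CC2 d p δ) * (2 * dist x y ^ δ) * B := by
          apply mul_le_mul_of_nonneg_right _ hB0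
          exact mul_le_mul_of_nonneg_left hρδ hCsum
      _ = (2*(2*(CC1 d p δ)/(1-qq δ) + CC2 d p δ)) * B * dist x y ^ δ := by ring
      _ ≤ NC d p δ * B * dist x y ^ δ := by
          apply mul_le_mul_of_nonneg_right _ (Real.rpow_nonneg hr0.le δ)
          exact mul_le_mul_of_nonneg_right hN1 hB0
  -- ENNReal Hölder estimate
  have holderE : ∀ x ∈ Q, ∀ y ∈ Q,
      (‖g x - g y‖₊ : ℝ≥0∞) ≤
        ENNReal.ofReal (NC d p δ) * A^(1/p) * (‖x - y‖₊ : ℝ≥0∞)^δ := by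
    intro x hx y hy
    by_cases hxy : x = y
    · simp [hxy]
    · have h := holderR x hx y hy hxy
      rw [← enorm_eq_nnnorm, ← ofReal_norm]
      calc ENNReal.ofReal ‖g x - g y‖
          ≤ ENNReal.ofReal (NC d p δ * B * dist x y ^ δ) :=
            ENNReal.ofReal_le_ofReal (by rw [← dist_eq_norm]; exact h)
        _ = ENNReal.ofReal (NC d p δ) * ENNReal.ofReal B
              * ENNReal.ofReal (dist x y ^ δ) := by
            rw [ENNReal.ofReal_mul (by positivity), ENNReal.ofReal_mul hN0.le]
        _ = ENNReal.ofReal (NC d p δ) * A^(1/p) * (‖x - y‖₊ : ℝ≥0∞)^δ := by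
            rw [hofB, ← ENNReal.ofReal_rpow_of_nonneg dist_nonneg hδ0.le,
              dist_eq_norm, ofReal_norm, enorm_eq_nnnorm]
  -- continuity
  have hcont : ContinuousOn g Q := by
    have hH : HolderOnWith (ENNReal.ofReal (NC d p δ) * A^(1/p)).toNNReal
        δ.toNNReal g Q := by
      intro x hx y hy
      rw [edist_eq_enorm_sub, edist_eq_enorm_sub,
        ENNReal.coe_toNNReal (ENNReal.mul_ne_top ENNReal.ofReal_ne_top hAp_ne_top),
        Real.coe_toNNReal δ hδ0.le]
      exact holderE x hx y hy
    exact hH.continuousOn (by simpa using hδ0)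
  -- a.e. identification with f
  have hkermeas : Measurable (Function.uncurry fun x y : EuclideanSpace ℝ (Fin d) =>
      (‖f x - f y‖₊ : ℝ≥0∞) ^ p / (‖x - y‖₊ : ℝ≥0∞) ^ m) := by
    apply Measurable.div
    · exact (((hfm.comp_measurable measurable_fst).sub
        (hfm.comp_measurable measurable_snd)).enorm).pow measurable_const
    · exact ((measurable_fst.sub measurable_snd).enorm).pow measurable_const
  have hI : ∀ᵐ x ∂(volume.restrict Q),
      (∫⁻ y in Q, (‖f x - f y‖₊:ℝ≥0∞)^p / (‖x - y‖₊:ℝ≥0∞)^m ∂volume) < ⊤ := by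
    refine ae_lt_top (Measurable.lintegral_prod_right hkermeas) ?_
    exact hA
  set e : ℝ := ((d:ℝ) + δ*p)/p with hedef
  have he0 : 0 < e := by positivity
  have haeeq : ∀ᵐ x ∂(volume.restrict Q), g x = f x := by
    filter_upwards [hI, self_mem_ae_restrict hQmeas (μ := volume)] with x hIx hx
    set Ix : ℝ≥0∞ := ∫⁻ y in Q, (‖f x - f y‖₊:ℝ≥0∞)^p / (‖x - y‖₊:ℝ≥0∞)^m ∂volume
      with hIxdef
    have hIxtop : Ix ≠ ⊤ := hIx.ne
    have hIxp : Ix ^ (1/p) ≠ ⊤ := ENNReal.rpow_ne_top_of_nonneg h1p hIxtop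
    set J : ℝ := (Ix^(1/p)).toReal with hJdef
    have hbound : ∀ n, dist (av x n) (f x) ≤ ((kap d)⁻¹^(1/p) * ρ n ^ e) * J := by
      intro n
      have hpt : ∀ v ∈ E x n, (‖f v - f x‖₊:ℝ≥0∞)^p ≤
          ENNReal.ofReal (ρ n) ^ m * ((‖f x - f v‖₊:ℝ≥0∞)^p / (‖x - v‖₊:ℝ≥0∞)^m) := by
        intro v hv
        have hd1 : ‖x - v‖ ≤ ρ n := by
          rw [← dist_eq_norm, dist_comm]
          exact (Metric.mem_ball.1 hv.2).le
        have hk := kernel_pointwise (w := x - v) (z := f x - f v) hm0 hp0 hd1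
          (fun h => by rw [sub_eq_zero] at h; rw [h, sub_self])
        rw [show (f v - f x) = -(f x - f v) from (neg_sub _ _).symm, nnnorm_neg]
        exact hk
      have hker1 : ∫⁻ v in E x n, (‖f v - f x‖₊:ℝ≥0∞)^p ∂volume ≤
          ENNReal.ofReal (ρ n) ^ m * Ix := by
        calc ∫⁻ v in E x n, (‖f v - f x‖₊:ℝ≥0∞)^p ∂volume
            ≤ ∫⁻ v in E x n, ENNReal.ofReal (ρ n) ^ m *
                ((‖f x - f v‖₊:ℝ≥0∞)^p / (‖x - v‖₊:ℝ≥0∞)^m) ∂volume :=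
              setLIntegral_mono' (hEmeas x n) hpt
          _ = ENNReal.ofReal (ρ n) ^ m * ∫⁻ v in E x n,
                (‖f x - f v‖₊:ℝ≥0∞)^p / (‖x - v‖₊:ℝ≥0∞)^m ∂volume :=
              lintegral_const_mul' _ _
                (ENNReal.rpow_ne_top_of_nonneg hm0 ENNReal.ofReal_ne_top)
          _ ≤ ENNReal.ofReal (ρ n) ^ m * Ix :=
              mul_le_mul_right (lintegral_mono_set (hEsub x n)) _
      have hmeasv : AEMeasurable (fun v => (‖f v - f x‖₊ : ℝ≥0∞))
          (volume.restrict (E x n)) :=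
        ((hfm.sub stronglyMeasurable_const).enorm).aemeasurable
      have hholder := lint_holder (μ := volume.restrict (E x n)) hmeasv hp
      rw [Measure.restrict_apply_univ] at hholder
      have hchain : (‖av x n - f x‖₊ : ℝ≥0∞) ≤
          ENNReal.ofReal ((kap d)⁻¹^(1/p) * ρ n ^ e) * Ix^(1/p) := by
        calc (‖av x n - f x‖₊ : ℝ≥0∞)
            ≤ (volume (E x n))⁻¹ * ∫⁻ v in E x n, ‖f v - f x‖₊ ∂volume :=
              ennnorm_Av_sub_const (f x) (hE0 x hx n) (hEfin x n) (hEint x n)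
          _ ≤ (volume (E x n))⁻¹ *
                ((∫⁻ v in E x n, (‖f v - f x‖₊:ℝ≥0∞)^p ∂volume)^(1/p)
                  * (volume (E x n))^(1-1/p)) := mul_le_mul_right hholder _
          _ = (volume (E x n))^(-(1/p)) *
                (∫⁻ v in E x n, (‖f v - f x‖₊:ℝ≥0∞)^p ∂volume)^(1/p) :=
              inv_mul_rpow_aux (hE0 x hx n) (hEfin x n)
          _ ≤ (ENNReal.ofReal (kap d * ρ n ^ (d:ℕ)))^(-(1/p)) *
                (ENNReal.ofReal (ρ n) ^ m * Ix)^(1/p) :=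
              mul_le_mul' (rpow_neg_antitone h1p (hEvol x hx n))
                (ENNReal.rpow_le_rpow hker1 h1p)
          _ = (ENNReal.ofReal (kap d * ρ n ^ (d:ℕ)))^(-(1/p)) *
                ((ENNReal.ofReal (ρ n) ^ m)^(1/p) * Ix^(1/p)) := by
              rw [ENNReal.mul_rpow_of_nonneg _ _ h1p]
          _ = ENNReal.ofReal ((ρ n ^ m / (kap d * ρ n ^ (d:ℕ)))^(1/p)) * Ix^(1/p) := by
              rw [← mul_assoc, ennreal_prefac2 (hρpos n)
                (mul_pos hκ (pow_pos (hρpos n) d)) hp0]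
          _ = ENNReal.ofReal ((kap d)⁻¹^(1/p) * ρ n ^ e) * Ix^(1/p) := by
              rw [real_prefac2 d hp0 (hρpos n) hκ hmm, hedef]
      exact dist_of_ennreal
        (mul_nonneg (Real.rpow_nonneg (by positivity) _)
          (Real.rpow_nonneg (hρpos n).le _)) hIxp hchain
    have hq2 : ((2:ℝ)^e)⁻¹ < 1 := by
      rw [inv_lt_one_iff₀]; right
      exact Real.one_lt_rpow_iff_of_pos (by norm_num) |>.2 (Or.inl ⟨one_lt_two, he0⟩)
    have hq2' : (0:ℝ) ≤ ((2:ℝ)^e)⁻¹ := by positivity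
    have htendgeo : Filter.Tendsto
        (fun n => (((kap d)⁻¹^(1/p) * R^e * J)) * (((2:ℝ)^e)⁻¹)^n)
        Filter.atTop (nhds 0) := by
      have h := tendsto_pow_atTop_nhds_zero_of_lt_one hq2' hq2
      simpa using h.const_mul (((kap d)⁻¹^(1/p) * R^e * J))
    have hconv : Filter.Tendsto (fun n => dist (av x n) (f x)) Filter.atTop (nhds 0) := by
      refine squeeze_zero (fun n => dist_nonneg) (fun n => ?_) htendgeo
      calc dist (av x n) (f x) ≤ ((kap d)⁻¹^(1/p) * ρ n ^ e) * J := hbound n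
        _ = (((kap d)⁻¹^(1/p) * R^e * J)) * (((2:ℝ)^e)⁻¹)^n := by
            rw [hgeoms e n]; ring
    exact tendsto_nhds_unique (htend x hx) (tendsto_iff_dist_tendsto_zero.2 hconv)
  -- sup bound
  have hQR : ∀ x ∈ Q, E x 0 = Q := by
    intro x hx
    refine Set.inter_eq_left.2 fun y hy => ?_
    rw [Metric.mem_ball]
    have h := dist_lt_of_mem_box hd hc hy hx
    have hρ0 : ρ 0 = R := by show R / 2^0 = R; simp
    rw [hρ0, hRdef]
    exact h
  have supE : ∀ x ∈ Q, (‖g x‖₊ : ℝ≥0∞) ≤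
      ENNReal.ofReal (NC d p δ) * (volume Q) ^ (δ/(d:ℝ)) * A^(1/p)
        + (volume Q) ^ (-(1/p)) * (∫⁻ x' in Q, (‖f x'‖₊:ℝ≥0∞)^p ∂volume)^(1/p) := by
    intro x hx
    have ht0 := htail x hx 0
    simp only [pow_zero, mul_one] at ht0
    have hav0 : av x 0 = Av volume f Q := by
      show Av volume f (E x 0) = Av volume f Q
      rw [hQR x hx]
    have h1q : 0 < 1 - qq δ := by linarith
    have hpart1 : (‖g x - Av volume f Q‖₊ : ℝ≥0∞) ≤
        ENNReal.ofReal (NC d p δ) * (volume Q) ^ (δ/(d:ℝ)) * A^(1/p) := by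
      have hreal : ‖g x - Av volume f Q‖ ≤
          (CC1 d p δ * (Real.sqrt d)^δ / (1 - qq δ)) * c^δ * B := by
        have hRδ : R^δ = (Real.sqrt d)^δ * c^δ := by
          rw [hRdef, Real.mul_rpow hc.le hsd.le]; ring
        calc ‖g x - Av volume f Q‖ = dist (av x 0) (g x) := by
              rw [← hav0, dist_comm, dist_eq_norm]
          _ ≤ CC1 d p δ * R^δ * B / (1 - qq δ) := ht0
          _ = (CC1 d p δ * (Real.sqrt d)^δ / (1 - qq δ)) * c^δ * B := by
              rw [hRδ]; ring
      have hvolδ : (volume Q) ^ (δ/(d:ℝ)) = ENNReal.ofReal (c^δ) := by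
        rw [hQvol, ← ENNReal.rpow_natCast (ENNReal.ofReal c) d, ← ENNReal.rpow_mul]
        have hdd : (d:ℝ) * (δ/(d:ℝ)) = δ := by
          field_simp
        rw [hdd, ENNReal.ofReal_rpow_of_pos hc]
      have hC1sd : 0 ≤ CC1 d p δ * (Real.sqrt d)^δ / (1 - qq δ) := by
        have := (CC1_pos hd (p := p) (δ := δ)).le
        positivity
      calc (‖g x - Av volume f Q‖₊ : ℝ≥0∞)
          = ENNReal.ofReal ‖g x - Av volume f Q‖ :=
            (ofReal_norm _).symm
        _ ≤ ENNReal.ofReal ((CC1 d p δ * (Real.sqrt d)^δ / (1 - qq δ)) * c^δ * B) :=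
            ENNReal.ofReal_le_ofReal hreal
        _ = ENNReal.ofReal (CC1 d p δ * (Real.sqrt d)^δ / (1 - qq δ))
              * ENNReal.ofReal (c^δ) * ENNReal.ofReal B := by
            rw [ENNReal.ofReal_mul (by positivity), ENNReal.ofReal_mul hC1sd]
        _ ≤ ENNReal.ofReal (NC d p δ) * (volume Q) ^ (δ/(d:ℝ)) * A^(1/p) := by
            rw [hvolδ, hofB]
            exact mul_le_mul_left (mul_le_mul_left
              (ENNReal.ofReal_le_ofReal hN2) _) _
    have hpart2 : (‖Av volume f Q‖₊ : ℝ≥0∞) ≤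
        (volume Q)^(-(1/p)) * (∫⁻ x' in Q, (‖f x'‖₊:ℝ≥0∞)^p ∂volume)^(1/p) := by
      have h1 := ennnorm_Av_sub_const (μ := volume) (f := f) (S := Q) 0 hQ0 hQfin hfi
      simp only [sub_zero] at h1
      have hH := lint_holder (μ := volume.restrict Q) ((hfm.enorm).aemeasurable) hp
      rw [Measure.restrict_apply_univ] at hH
      calc (‖Av volume f Q‖₊ : ℝ≥0∞)
          ≤ (volume Q)⁻¹ * ∫⁻ v in Q, ‖f v‖₊ ∂volume := h1
        _ ≤ (volume Q)⁻¹ * ((∫⁻ v in Q, (‖f v‖₊:ℝ≥0∞)^p ∂volume)^(1/p)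
              * (volume Q)^(1-1/p)) := mul_le_mul_right hH _
        _ = (volume Q)^(-(1/p)) * (∫⁻ v in Q, (‖f v‖₊:ℝ≥0∞)^p ∂volume)^(1/p) :=
            inv_mul_rpow_aux hQ0 hQfin
    calc (‖g x‖₊ : ℝ≥0∞)
        ≤ (‖g x - Av volume f Q‖₊ : ℝ≥0∞) + (‖Av volume f Q‖₊ : ℝ≥0∞) := by
          have h := nnnorm_add_le (g x - Av volume f Q) (Av volume f Q)
          rw [sub_add_cancel] at h
          exact_mod_cast h
      _ ≤ _ := add_le_add hpart1 hpart2
  exact ⟨g, haeeq, hcont, fun x hx y hy => holderE x hx y hy, supE⟩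

end GRRAux

open MeasureTheory ENNReal

universe u

/-- Sobolev-type embedding on a bounded open cube `Q ⊂ ℝ^d`.
If `f : Q → V` is Bochner integrable with finite fractional seminorm
`[f]_{δ,p;Q;V} = (∫_Q ∫_Q ‖f x − f y‖^p / |x−y|^{2d+δp})^{1/p}`, then `f` has a modification
`g` which is (bounded) continuous on `Q` with `[g]_{δ;Q;V} ≤ N [f]_{δ,p;Q;V}` and
`sup_Q ‖g‖ ≤ N |Q|^{δ/d} [f]_{δ,p;Q;V} + |Q|^{−1/p} (∫_Q ‖f‖^p)^{1/p}`,
where `N = N(d,δ,p)` does not depend on `f` or on `Q`. -/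
theorem stmt_0 (d : ℕ) (hd : 1 ≤ d) (p δ : ℝ) (hp : 1 ≤ p) (hδ : δ ∈ Set.Ioc (0 : ℝ) 1) :
    ∃ N : ℝ, 0 < N ∧
      ∀ (V : Type u) [NormedAddCommGroup V] [NormedSpace ℝ V] [CompleteSpace V]
        (a : EuclideanSpace ℝ (Fin d)) (c : ℝ), 0 < c →
        ∀ Q : Set (EuclideanSpace ℝ (Fin d)),
          Q = {x : EuclideanSpace ℝ (Fin d) | ∀ i, x i ∈ Set.Ioo (a i) (a i + c)} →
        ∀ f : EuclideanSpace ℝ (Fin d) → V, IntegrableOn f Q volume →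
        (∫⁻ x in Q, ∫⁻ y in Q,
            (‖f x - f y‖₊ : ℝ≥0∞) ^ p / (‖x - y‖₊ : ℝ≥0∞) ^ (2 * (d : ℝ) + δ * p)
            ∂volume ∂volume) ≠ ⊤ →
        ∃ g : EuclideanSpace ℝ (Fin d) → V,
          (∀ᵐ x ∂volume.restrict Q, g x = f x) ∧
          ContinuousOn g Q ∧
          (∀ x ∈ Q, ∀ y ∈ Q,
            (‖g x - g y‖₊ : ℝ≥0∞) ≤
              ENNReal.ofReal N *
                (∫⁻ x' in Q, ∫⁻ y' in Q,
                  (‖f x' - f y'‖₊ : ℝ≥0∞) ^ p /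
                    (‖x' - y'‖₊ : ℝ≥0∞) ^ (2 * (d : ℝ) + δ * p) ∂volume ∂volume) ^ (1 / p) *
                (‖x - y‖₊ : ℝ≥0∞) ^ δ) ∧
          (∀ x ∈ Q,
            (‖g x‖₊ : ℝ≥0∞) ≤
              ENNReal.ofReal N * volume Q ^ (δ / (d : ℝ)) *
                (∫⁻ x' in Q, ∫⁻ y' in Q,
                  (‖f x' - f y'‖₊ : ℝ≥0∞) ^ p /
                    (‖x' - y'‖₊ : ℝ≥0∞) ^ (2 * (d : ℝ) + δ * p) ∂volume ∂volume) ^ (1 / p) +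
                volume Q ^ (-(1 / p)) *
                  (∫⁻ x' in Q, (‖f x'‖₊ : ℝ≥0∞) ^ p ∂volume) ^ (1 / p)) := by
  obtain ⟨hδ0, hδ1⟩ := hδ
  refine ⟨GRRAux.NC d p δ, GRRAux.NC_pos, ?_⟩
  intro V _ _ _ a c hc Q hQ f hfi hA
  have hQb : Q = GRRAux.box a c := hQ
  subst hQb
  have hmdef : GRRAux.mm d p δ = 2 * (d:ℝ) + δ * p := rfl
  have hsm : AEStronglyMeasurable f (volume.restrict (GRRAux.box a c)) :=
    hfi.aestronglyMeasurable
  set f₀ := hsm.mk f with hf₀def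
  have hf₀m : StronglyMeasurable f₀ := hsm.stronglyMeasurable_mk
  have hae : f =ᵐ[volume.restrict (GRRAux.box a c)] f₀ := hsm.ae_eq_mk
  have hfi₀ : IntegrableOn f₀ (GRRAux.box a c) volume := (integrable_congr hae).1 hfi
  have hAeq : (∫⁻ x in GRRAux.box a c, ∫⁻ y in GRRAux.box a c,
      (‖f x - f y‖₊ : ℝ≥0∞) ^ p / (‖x - y‖₊ : ℝ≥0∞) ^ (GRRAux.mm d p δ)
      ∂volume ∂volume)
      = (∫⁻ x in GRRAux.box a c, ∫⁻ y in GRRAux.box a c,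
      (‖f₀ x - f₀ y‖₊ : ℝ≥0∞) ^ p / (‖x - y‖₊ : ℝ≥0∞) ^ (GRRAux.mm d p δ)
      ∂volume ∂volume) := by
    apply lintegral_congr_ae
    filter_upwards [hae] with x hxeq
    apply lintegral_congr_ae
    filter_upwards [hae] with y hyeq
    rw [hxeq, hyeq]
  have hNeq : (∫⁻ x in GRRAux.box a c, (‖f x‖₊ : ℝ≥0∞) ^ p ∂volume)
      = ∫⁻ x in GRRAux.box a c, (‖f₀ x‖₊ : ℝ≥0∞) ^ p ∂volume := by
    apply lintegral_congr_ae
    filter_upwards [hae] with x hxeq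
    rw [hxeq]
  have hA₀ : (∫⁻ x in GRRAux.box a c, ∫⁻ y in GRRAux.box a c,
      (‖f₀ x - f₀ y‖₊ : ℝ≥0∞) ^ p / (‖x - y‖₊ : ℝ≥0∞) ^ (GRRAux.mm d p δ)
      ∂volume ∂volume) ≠ ⊤ := by
    rw [← hAeq, hmdef]
    exact hA
  obtain ⟨g, hg1, hg2, hg3, hg4⟩ :=
    GRRAux.main hd hp hδ0 hδ1 a hc hf₀m hfi₀ hA₀
  refine ⟨g, ?_, hg2, ?_, ?_⟩
  · filter_upwards [hg1, hae] with x h1 h2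
    rw [h1, h2]
  · intro x hx y hy
    have h := hg3 x hx y hy
    rw [← hmdef, hAeq]
    exact h
  · intro x hx
    have h := hg4 x hx
    rw [← hmdef, hAeq, hNeq]
    exact h
end

section
/- Let d ≥ 1 and let h : ℝ^d → ℝ^d be continuously differentiable. Assume there are constants K ≥ 0, η ∈ (0,1), and N_κ > 0 such that: (i) |h(x)| ≤ K(1+|x|) for all x ∈ ℝ^d; (ii) for every x with |∇h(x)| > η, the matrix I_d + ∇h(x) is invertible and |(I_d + ∇h(x))^{−1}| ≤ N_κ. Set N̄ := max((1−η)^{−1}, N_κ). Then the map h̃ : ℝ^d → ℝ^d defined by h̃(x) := x + h(x) is a diffeomorphism of ℝ^d, its inverse h̃^{−1} is Lipschitz with |h̃^{−1}(x) − h̃^{−1}(y)| ≤ N̄ |x−y| for all x, y (in particular |∇h̃^{−1}(x)| ≤ N̄ for all x), and |h̃^{−1}(x)| ≤ N̄ K + N̄ |x| for all x ∈ ℝ^d. -/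
open Metric Set Filter Topology NNReal

section Hadamard
variable {E : Type*} [NormedAddCommGroup E] [NormedSpace ℝ E] [CompleteSpace E]

lemma hadamard_liftUnique (f : E → E)
    (hloc : ∀ x : E, ∃ r, 0 < r ∧ Set.InjOn f (closedBall x r))
    {T : ℝ} {γ₁ γ₂ : ℝ → E}
    (h₁ : ContinuousOn γ₁ (Icc 0 T)) (h₂ : ContinuousOn γ₂ (Icc 0 T))
    (hf : ∀ t ∈ Icc (0:ℝ) T, f (γ₁ t) = f (γ₂ t)) (h0 : γ₁ 0 = γ₂ 0)
    (hT : 0 ≤ T) :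
    ∀ t ∈ Icc (0:ℝ) T, γ₁ t = γ₂ t := by
  set S : Set ℝ := {t | t ∈ Icc (0:ℝ) T ∧ ∀ s ∈ Icc (0:ℝ) t, γ₁ s = γ₂ s} with hS
  have hS0 : (0:ℝ) ∈ S := by
    refine ⟨⟨le_rfl, hT⟩, fun s hs => ?_⟩
    have : s = 0 := le_antisymm hs.2 hs.1
    rw [this]; exact h0
  have hne : S.Nonempty := ⟨0, hS0⟩
  have hbdd : BddAbove S := ⟨T, fun t ht => ht.1.2⟩
  set τ := sSup S with hτ
  have hτmem : τ ∈ Icc (0:ℝ) T := ⟨le_csSup hbdd hS0, csSup_le hne fun t ht => ht.1.2⟩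
  have hlt : ∀ s, 0 ≤ s → s < τ → γ₁ s = γ₂ s := by
    intro s hs0 hsτ
    obtain ⟨t, htS, hst⟩ := exists_lt_of_lt_csSup hne hsτ
    exact htS.2 s ⟨hs0, hst.le⟩
  have hτeq : γ₁ τ = γ₂ τ := by
    rcases eq_or_lt_of_le hτmem.1 with h0τ | h0τ
    · rw [← h0τ]; exact h0
    · -- limit argument
      set u : ℕ → ℝ := fun n => τ - τ * (1 / (n + 1)) with hu
      have hulim : Tendsto u atTop (𝓝 τ) := by
        have h1 : Tendsto (fun n : ℕ => τ * (1 / (n + 1))) atTop (𝓝 (τ * 0)) :=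
          tendsto_one_div_add_atTop_nhds_zero_nat.const_mul τ
        rw [mul_zero] at h1
        have h2 : Tendsto (fun n : ℕ => τ - τ * (1 / (n + 1))) atTop (𝓝 (τ - 0)) :=
          tendsto_const_nhds.sub h1
        rw [sub_zero] at h2; exact h2
      have humem : ∀ n, u n ∈ Ico (0:ℝ) τ := by
        intro n
        have hpos : 0 < τ * (1 / (n + 1)) := by positivity
        have hle : τ * (1 / (n + 1)) ≤ τ := by
          have : (1:ℝ) / (n + 1) ≤ 1 := by
            rw [div_le_one (by positivity)]; linarith [Nat.cast_nonneg (α := ℝ) n]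
          nlinarith
        constructor
        · show 0 ≤ τ - τ * (1 / (n + 1)); linarith
        · show τ - τ * (1 / (n + 1)) < τ; linarith
      have humem' : ∀ n, u n ∈ Icc (0:ℝ) T :=
        fun n => ⟨(humem n).1, le_trans (humem n).2.le hτmem.2⟩
      have hulim' : Tendsto u atTop (𝓝[Icc (0:ℝ) T] τ) :=
        tendsto_nhdsWithin_of_tendsto_nhds_of_eventually_within u hulim
          (Eventually.of_forall humem')
      have t1 : Tendsto (fun n => γ₁ (u n)) atTop (𝓝 (γ₁ τ)) :=
        ((h₁ τ hτmem).tendsto).comp hulim'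
      have t2 : Tendsto (fun n => γ₂ (u n)) atTop (𝓝 (γ₂ τ)) :=
        ((h₂ τ hτmem).tendsto).comp hulim'
      have heq : (fun n => γ₁ (u n)) = fun n => γ₂ (u n) := by
        funext n; exact hlt (u n) (humem n).1 (humem n).2
      rw [heq] at t1
      exact tendsto_nhds_unique t1 t2
  have hτT : τ = T := by
    by_contra hne'
    have hτltT : τ < T := lt_of_le_of_ne hτmem.2 hne'
    obtain ⟨r, hr, hinj⟩ := hloc (γ₁ τ)
    have hc₁ := (h₁ τ hτmem)
    have hc₂ := (h₂ τ hτmem)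
    rw [Metric.continuousWithinAt_iff] at hc₁ hc₂
    obtain ⟨δ₁, hδ₁, hb₁⟩ := hc₁ r hr
    obtain ⟨δ₂, hδ₂, hb₂⟩ := hc₂ r hr
    set t₀ := min T (τ + min δ₁ δ₂ / 2) with ht₀
    have hmin : 0 < min δ₁ δ₂ := lt_min hδ₁ hδ₂
    have hτt₀ : τ < t₀ := lt_min hτltT (by linarith)
    have ht₀mem : t₀ ∈ Icc (0:ℝ) T := ⟨le_trans hτmem.1 hτt₀.le, min_le_left _ _⟩
    have hnew : ∀ s, τ < s → s ≤ t₀ → γ₁ s = γ₂ s := by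
      intro s hτs hst₀
      have hsmem : s ∈ Icc (0:ℝ) T := ⟨le_trans hτmem.1 hτs.le, le_trans hst₀ ht₀mem.2⟩
      have hds : dist s τ < min δ₁ δ₂ := by
        rw [Real.dist_eq, abs_of_pos (by linarith)]
        have : s ≤ τ + min δ₁ δ₂ / 2 := le_trans hst₀ (min_le_right _ _)
        linarith
      have hg1 : γ₁ s ∈ closedBall (γ₁ τ) r :=
        (mem_closedBall).2 (le_of_lt (hb₁ hsmem (lt_of_lt_of_le hds (min_le_left _ _))))
      have hg2 : γ₂ s ∈ closedBall (γ₁ τ) r := by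
        have := hb₂ hsmem (lt_of_lt_of_le hds (min_le_right _ _))
        rw [← hτeq] at this
        exact (mem_closedBall).2 this.le
      exact hinj hg1 hg2 (hf s hsmem)
    have ht₀S : t₀ ∈ S := by
      refine ⟨ht₀mem, fun s hs => ?_⟩
      rcases lt_or_ge s τ with h | h
      · exact hlt s hs.1 h
      rcases eq_or_lt_of_le h with h' | h'
      · rw [← h']; exact hτeq
      · exact hnew s h' hs.2
    exact absurd (le_csSup hbdd ht₀S) (not_le.2 hτt₀)
  intro t ht
  rcases lt_or_ge t τ with h | h
  · exact hlt t ht.1 h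
  · have : t = τ := le_antisymm (hτT ▸ ht.2) h
    rw [this]; exact hτeq

lemma hadamard_contOn_of_lip {γ : ℝ → E} {T L : ℝ} (hL0 : 0 ≤ L)
    (hlip : ∀ s ∈ Icc (0:ℝ) T, ∀ t ∈ Icc (0:ℝ) T, ‖γ s - γ t‖ ≤ L * |s - t|) :
    ContinuousOn γ (Icc 0 T) := by
  intro x hx
  rw [Metric.continuousWithinAt_iff]
  intro ε hε
  refine ⟨ε / (L + 1), by positivity, fun y hy hd => ?_⟩
  have := hlip y hy x hx
  rw [dist_eq_norm]
  calc ‖γ y - γ x‖ ≤ L * |y - x| := this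
    _ ≤ L * (ε / (L + 1)) := by
        apply mul_le_mul_of_nonneg_left _ hL0
        rw [← Real.dist_eq]; exact hd.le
    _ < ε := by
        rw [div_eq_mul_inv, ← mul_assoc, mul_comm L ε, mul_assoc]
        have h1 : L * (L+1)⁻¹ < 1 := by
          rw [← div_eq_mul_inv, div_lt_one (by linarith)]; linarith
        nlinarith

lemma hadamard_liftExists (f : E → E) (hfc : Continuous f) (M : ℝ) (hM : 1 ≤ M)
    (hkey : ∀ x : E, ∃ r, 0 < r ∧
      (∀ u ∈ closedBall x r, ∀ w ∈ closedBall x r, ‖u - w‖ ≤ 2*M*‖f u - f w‖) ∧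
      (∀ y ∈ closedBall (f x) (r/(2*M)), ∃ z ∈ closedBall x r, f z = y))
    (hloc : ∀ x : E, ∃ r, 0 < r ∧ Set.InjOn f (closedBall x r))
    (x₀ : E) (v : E) :
    ∃ γ : ℝ → E, γ 0 = x₀ ∧ (∀ t ∈ Icc (0:ℝ) 1, f (γ t) = f x₀ + t • v) ∧
      ∀ s ∈ Icc (0:ℝ) 1, ∀ t ∈ Icc (0:ℝ) 1, ‖γ s - γ t‖ ≤ 2*M*‖v‖*|s - t| := by
  classical
  have hM0 : (0:ℝ) < M := lt_of_lt_of_le one_pos hM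
  set L : ℝ := 2*M*‖v‖ with hLdef
  have hL0 : 0 ≤ L := by positivity
  set Q : Set ℝ := {T | T ∈ Icc (0:ℝ) 1 ∧ ∃ γ : ℝ → E, γ 0 = x₀ ∧
      (∀ t ∈ Icc (0:ℝ) T, f (γ t) = f x₀ + t • v) ∧
      (∀ s ∈ Icc (0:ℝ) T, ∀ t ∈ Icc (0:ℝ) T, ‖γ s - γ t‖ ≤ L * |s - t|)} with hQdef
  have hQ0 : (0:ℝ) ∈ Q := by
    refine ⟨⟨le_rfl, zero_le_one⟩, fun _ => x₀, rfl, ?_, ?_⟩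
    · intro t ht
      have ht0 : t = 0 := le_antisymm ht.2 ht.1
      rw [ht0]; simp
    · intro s hs t ht
      have hs0 : s = 0 := le_antisymm hs.2 hs.1
      have ht0 : t = 0 := le_antisymm ht.2 ht.1
      rw [hs0, ht0]; simp
  have hQne : Q.Nonempty := ⟨0, hQ0⟩
  have hbdd : BddAbove Q := ⟨1, fun t ht => ht.1.2⟩
  set τ := sSup Q with hτdef
  have hτmem : τ ∈ Icc (0:ℝ) 1 := ⟨le_csSup hbdd hQ0, csSup_le hQne fun t ht => ht.1.2⟩
  -- Step A : τ ∈ Q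
  have hPτ : ∃ γ : ℝ → E, γ 0 = x₀ ∧
      (∀ t ∈ Icc (0:ℝ) τ, f (γ t) = f x₀ + t • v) ∧
      (∀ s ∈ Icc (0:ℝ) τ, ∀ t ∈ Icc (0:ℝ) τ, ‖γ s - γ t‖ ≤ L * |s - t|) := by
    rcases eq_or_lt_of_le hτmem.1 with h0τ | h0τ
    · rw [← h0τ]; exact hQ0.2
    · have hseq : ∀ n : ℕ, ∃ tn, tn ∈ Q ∧ τ - τ * (1/(n+1)) < tn := by
        intro n
        refine exists_lt_of_lt_csSup hQne ?_
        have : 0 < τ * (1/(n+1)) := by positivity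
        linarith
      choose u huQ hul using hseq
      have huτ : ∀ n, u n ≤ τ := fun n => le_csSup hbdd (huQ n)
      have hu0 : ∀ n, 0 ≤ u n := fun n => (huQ n).1.1
      have hulim : Tendsto u atTop (𝓝 τ) := by
        have h1 : Tendsto (fun n : ℕ => τ * (1 / (n + 1))) atTop (𝓝 (τ * 0)) :=
          tendsto_one_div_add_atTop_nhds_zero_nat.const_mul τ
        rw [mul_zero] at h1
        have h2 : Tendsto (fun n : ℕ => τ - τ * (1 / (n + 1))) atTop (𝓝 (τ - 0)) :=
          tendsto_const_nhds.sub h1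
        rw [sub_zero] at h2
        exact tendsto_of_tendsto_of_tendsto_of_le_of_le h2 tendsto_const_nhds
          (fun n => (hul n).le) huτ
      choose γs hγ0 hγf hγlip using fun n => (huQ n).2
      have hglue : ∀ m n, u m ≤ u n → ∀ t ∈ Icc (0:ℝ) (u m), γs m t = γs n t := by
        intro m n hmn
        refine hadamard_liftUnique f hloc (hadamard_contOn_of_lip hL0 (hγlip m))
          (hadamard_contOn_of_lip hL0 ?_) ?_ ((hγ0 m).trans (hγ0 n).symm) (hu0 m)
        · intro s hs t ht
          exact hγlip n s ⟨hs.1, hs.2.trans hmn⟩ t ⟨ht.1, ht.2.trans hmn⟩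
        · intro t ht
          rw [hγf m t ht, hγf n t ⟨ht.1, ht.2.trans hmn⟩]
      set e : ℕ → E := fun n => γs n (u n) with hedef
      have hdiste : ∀ m n, ‖e m - e n‖ ≤ L * |u m - u n| := by
        have main : ∀ m n, u m ≤ u n → ‖e m - e n‖ ≤ L * |u m - u n| := by
          intro m n hmn
          have h1 : γs m (u m) = γs n (u m) := hglue m n hmn (u m) ⟨hu0 m, le_rfl⟩
          show ‖γs m (u m) - γs n (u n)‖ ≤ L * |u m - u n|
          rw [h1]
          exact hγlip n (u m) ⟨hu0 m, hmn⟩ (u n) ⟨hu0 n, le_rfl⟩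
        intro m n
        rcases le_total (u m) (u n) with h | h
        · exact main m n h
        · rw [norm_sub_rev, abs_sub_comm]; exact main n m h
      have hecau : CauchySeq e := by
        rw [Metric.cauchySeq_iff]
        intro ε hε
        have hucau : CauchySeq u := hulim.cauchySeq
        rw [Metric.cauchySeq_iff] at hucau
        obtain ⟨N, hN⟩ := hucau (ε / (L+1)) (by positivity)
        refine ⟨N, fun m hm n hn => ?_⟩
        have h1 := hdiste m n
        have h2 : |u m - u n| < ε / (L+1) := by
          rw [← Real.dist_eq]; exact hN m hm n hn
        rw [dist_eq_norm]
        calc ‖e m - e n‖ ≤ L * |u m - u n| := h1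
          _ ≤ L * (ε / (L+1)) := by
              apply mul_le_mul_of_nonneg_left h2.le hL0
          _ < ε := by
              rw [div_eq_mul_inv, ← mul_assoc, mul_comm L ε, mul_assoc]
              have h3 : L * (L+1)⁻¹ < 1 := by
                rw [← div_eq_mul_inv, div_lt_one (by linarith)]; linarith
              nlinarith
      obtain ⟨w, hw⟩ := cauchySeq_tendsto_of_complete hecau
      set γ : ℝ → E := fun t => if h : (∃ n, t ≤ u n) then γs (Nat.find h) t else w with hγdef
      have hγval : ∀ t, 0 ≤ t → ∀ n, t ≤ u n → γ t = γs n t := by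
        intro t ht n hn
        have hex : ∃ k, t ≤ u k := ⟨n, hn⟩
        rw [show γ t = γs (Nat.find hex) t from dif_pos hex]
        have hfind := Nat.find_spec hex
        rcases le_total (u (Nat.find hex)) (u n) with h | h
        · exact hglue _ n h t ⟨ht, hfind⟩
        · exact (hglue n _ h t ⟨ht, hn⟩).symm
      have hno : ∀ t, t ∈ Icc (0:ℝ) τ → (¬∃ n, t ≤ u n) → t = τ ∧ γ t = w := by
        intro t ht hex
        have hex' := hex
        push_neg at hex'
        constructor
        · refine le_antisymm ht.2 ?_
          exact le_of_tendsto hulim (Eventually.of_forall fun n => (hex' n).le)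
        · exact dif_neg hex
      have hfw : f w = f x₀ + τ • v := by
        have h1 : Tendsto (fun n => f (e n)) atTop (𝓝 (f w)) := (hfc.tendsto w).comp hw
        have h2 : (fun n => f (e n)) = fun n => f x₀ + (u n) • v :=
          funext fun n => hγf n (u n) ⟨hu0 n, le_rfl⟩
        have h3 : Tendsto (fun n => f x₀ + (u n) • v) atTop (𝓝 (f x₀ + τ • v)) :=
          tendsto_const_nhds.add (hulim.smul_const v)
        rw [h2] at h1
        exact tendsto_nhds_unique h1 h3
      have hlimb : ∀ s, 0 ≤ s → (∃ n, s ≤ u n) → ‖γ s - w‖ ≤ L * |s - τ| := by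
        intro s hs hex
        obtain ⟨n, hn⟩ := hex
        have hbd : ∀ k, ‖γ s - e k‖ ≤ L * |s - u k| := by
          intro k
          rcases le_total (u k) (u n) with h | h
          · have h1 : γs k (u k) = γs n (u k) := hglue k n h (u k) ⟨hu0 k, le_rfl⟩
            rw [hγval s hs n hn]
            show ‖γs n s - γs k (u k)‖ ≤ L * |s - u k|
            rw [h1]
            exact hγlip n s ⟨hs, hn⟩ (u k) ⟨hu0 k, h⟩
          · rw [hγval s hs k (le_trans hn h)]
            exact hγlip k s ⟨hs, le_trans hn h⟩ (u k) ⟨hu0 k, le_rfl⟩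
        have t1 : Tendsto (fun k => ‖γ s - e k‖) atTop (𝓝 (‖γ s - w‖)) :=
          (tendsto_const_nhds.sub hw).norm
        have t2 : Tendsto (fun k => L * |s - u k|) atTop (𝓝 (L * |s - τ|)) :=
          ((tendsto_const_nhds.sub hulim).abs).const_mul L
        exact le_of_tendsto_of_tendsto' t1 t2 hbd
      refine ⟨γ, ?_, ?_, ?_⟩
      · rw [hγval 0 le_rfl 0 (hu0 0)]; exact hγ0 0
      · intro t ht
        by_cases hex : ∃ n, t ≤ u n
        · obtain ⟨n, hn⟩ := hex
          rw [hγval t ht.1 n hn]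
          exact hγf n t ⟨ht.1, hn⟩
        · obtain ⟨hteq, hγw⟩ := hno t ht hex
          rw [hγw, hfw, hteq]
      · intro s hs t ht
        by_cases hexs : ∃ n, s ≤ u n
        · by_cases hext : ∃ n, t ≤ u n
          · obtain ⟨a, ha⟩ := hexs
            obtain ⟨b, hb⟩ := hext
            rcases le_total (u a) (u b) with h | h
            · rw [hγval s hs.1 b (ha.trans h), hγval t ht.1 b hb]
              exact hγlip b s ⟨hs.1, ha.trans h⟩ t ⟨ht.1, hb⟩
            · rw [hγval s hs.1 a ha, hγval t ht.1 a (hb.trans h)]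
              exact hγlip a s ⟨hs.1, ha⟩ t ⟨ht.1, hb.trans h⟩
          · obtain ⟨hteq, hγw⟩ := hno t ht hext
            rw [hγw, hteq]
            exact hlimb s hs.1 hexs
        · obtain ⟨hseq', hγws⟩ := hno s hs hexs
          by_cases hext : ∃ n, t ≤ u n
          · rw [norm_sub_rev, abs_sub_comm, hγws, hseq']
            exact hlimb t ht.1 hext
          · obtain ⟨hteq, hγwt⟩ := hno t ht hext
            rw [hγws, hγwt, hseq', hteq]
            simp
  -- Step B : τ = 1
  have hτQ : τ ∈ Q := ⟨hτmem, hPτ⟩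
  have hτ1 : τ = 1 := by
    by_contra hne'
    have hτlt : τ < 1 := lt_of_le_of_ne hτmem.2 hne'
    obtain ⟨γτ, hγτ0, hγτf, hγτlip⟩ := hPτ
    set x₁ := γτ τ with hx₁def
    obtain ⟨r, hr, hanti, hsurj⟩ := hkey x₁
    have hfx₁ : f x₁ = f x₀ + τ • v := hγτf τ ⟨hτmem.1, le_rfl⟩
    set δ := min (1 - τ) (r / (2*M*(‖v‖+1))) with hδdef
    have hδ0 : 0 < δ := lt_min (by linarith) (by positivity)
    have hδr : δ * ‖v‖ ≤ r / (2*M) := by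
      have h1 : δ ≤ r / (2*M*(‖v‖+1)) := min_le_right _ _
      have h2 : 0 ≤ ‖v‖ := norm_nonneg v
      have h3 : δ * ‖v‖ ≤ (r / (2*M*(‖v‖+1))) * ‖v‖ :=
        mul_le_mul_of_nonneg_right h1 h2
      refine h3.trans ?_
      rw [div_mul_eq_mul_div, div_le_div_iff₀ (by positivity) (by positivity)]
      nlinarith
    have htar : ∀ t ∈ Icc τ (τ+δ), f x₀ + t • v ∈ closedBall (f x₁) (r/(2*M)) := by
      intro t ht
      rw [mem_closedBall, dist_eq_norm, hfx₁]
      have h1 : f x₀ + t • v - (f x₀ + τ • v) = (t - τ) • v := by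
        rw [add_sub_add_left_eq_sub, ← sub_smul]
      rw [h1, norm_smul, Real.norm_eq_abs, abs_of_nonneg (by linarith [ht.1])]
      have h2 : t - τ ≤ δ := by linarith [ht.2]
      calc (t - τ) * ‖v‖ ≤ δ * ‖v‖ := mul_le_mul_of_nonneg_right h2 (norm_nonneg v)
        _ ≤ r / (2*M) := hδr
    set z : ℝ → E := fun t => if ht : t ∈ Icc τ (τ+δ) then (hsurj _ (htar t ht)).choose else x₁
      with hzdef
    have hz : ∀ t (ht : t ∈ Icc τ (τ+δ)), z t ∈ closedBall x₁ r ∧ f (z t) = f x₀ + t • v := by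
      intro t ht
      have h1 : z t = (hsurj _ (htar t ht)).choose := dif_pos ht
      rw [h1]
      exact ⟨(hsurj _ (htar t ht)).choose_spec.1, (hsurj _ (htar t ht)).choose_spec.2⟩
    have hzlip : ∀ s ∈ Icc τ (τ+δ), ∀ t ∈ Icc τ (τ+δ), ‖z s - z t‖ ≤ L * |s - t| := by
      intro s hs t ht
      have h1 := hanti (z s) (hz s hs).1 (z t) (hz t ht).1
      rw [(hz s hs).2, (hz t ht).2] at h1
      have h2 : f x₀ + s • v - (f x₀ + t • v) = (s - t) • v := by
        rw [add_sub_add_left_eq_sub, ← sub_smul]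
      rw [h2, norm_smul, Real.norm_eq_abs] at h1
      calc ‖z s - z t‖ ≤ 2*M*(|s-t| * ‖v‖) := h1
        _ = L * |s - t| := by rw [hLdef]; ring
    have hzτ : z τ = x₁ := by
      have hτmem' : τ ∈ Icc τ (τ+δ) := ⟨le_rfl, by linarith⟩
      have h1 := hanti (z τ) (hz τ hτmem').1 x₁ (mem_closedBall_self hr.le)
      rw [(hz τ hτmem').2, hfx₁, sub_self, norm_zero, mul_zero] at h1
      exact sub_eq_zero.1 (norm_le_zero_iff.1 h1)
    set γ' : ℝ → E := fun t => if t ≤ τ then γτ t else z t with hγ'def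
    have hγ'val₁ : ∀ t, t ≤ τ → γ' t = γτ t := fun t ht => if_pos ht
    have hγ'val₂ : ∀ t, τ < t → γ' t = z t := fun t ht => if_neg (not_le.2 ht)
    have hτδQ : τ + δ ∈ Q := by
      refine ⟨⟨by linarith [hτmem.1], by linarith [min_le_left (1-τ) (r / (2*M*(‖v‖+1)))]⟩,
        γ', ?_, ?_, ?_⟩
      · rw [hγ'val₁ 0 hτmem.1]; exact hγτ0
      · intro t ht
        rcases le_or_gt t τ with h | h
        · rw [hγ'val₁ t h]; exact hγτf t ⟨ht.1, h⟩
        · rw [hγ'val₂ t h]; exact (hz t ⟨h.le, ht.2⟩).2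
      · have key : ∀ s ∈ Icc (0:ℝ) (τ+δ), ∀ t ∈ Icc (0:ℝ) (τ+δ), s ≤ t →
            ‖γ' s - γ' t‖ ≤ L * |s - t| := by
          intro s hs t ht hst
          rcases le_or_gt t τ with h | h
          · rw [hγ'val₁ s (hst.trans h), hγ'val₁ t h]
            exact hγτlip s ⟨hs.1, hst.trans h⟩ t ⟨ht.1, h⟩
          · rcases le_or_gt s τ with h' | h'
            · rw [hγ'val₁ s h', hγ'val₂ t h]
              have b1 : ‖γτ s - x₁‖ ≤ L * (τ - s) := by
                have := hγτlip s ⟨hs.1, h'⟩ τ ⟨hτmem.1, le_rfl⟩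
                rwa [abs_of_nonpos (by linarith), neg_sub] at this
              have b2 : ‖z τ - z t‖ ≤ L * (t - τ) := by
                have := hzlip τ ⟨le_rfl, by linarith⟩ t ⟨h.le, ht.2⟩
                rwa [abs_of_nonpos (by linarith), neg_sub] at this
              rw [hzτ] at b2
              calc ‖γτ s - z t‖ = ‖(γτ s - x₁) + (x₁ - z t)‖ := by abel_nf
                _ ≤ ‖γτ s - x₁‖ + ‖x₁ - z t‖ := norm_add_le _ _
                _ ≤ L * (τ - s) + L * (t - τ) := add_le_add b1 b2
                _ = L * |s - t| := by
                    rw [abs_of_nonpos (by linarith), neg_sub]; ring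
            · rw [hγ'val₂ s h', hγ'val₂ t h]
              exact hzlip s ⟨h'.le, hs.2⟩ t ⟨h.le, ht.2⟩
        intro s hs t ht
        rcases le_total s t with h | h
        · exact key s hs t ht h
        · rw [norm_sub_rev, abs_sub_comm]; exact key t ht s hs h
    have : τ + δ ≤ τ := le_csSup hbdd hτδQ
    linarith
  obtain ⟨γ, hγ0, hγf, hγlip⟩ := hPτ
  rw [hτ1] at hγf hγlip
  exact ⟨γ, hγ0, hγf, hγlip⟩

lemma hadamard_liftStable (f : E → E) (M : ℝ) (hM : 1 ≤ M)
    (hkey : ∀ x : E, ∃ r, 0 < r ∧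
      (∀ u ∈ closedBall x r, ∀ w ∈ closedBall x r, ‖u - w‖ ≤ 2*M*‖f u - f w‖) ∧
      (∀ y ∈ closedBall (f x) (r/(2*M)), ∃ z ∈ closedBall x r, f z = y))
    {γ : ℝ → E} (hγc : ContinuousOn γ (Icc 0 1)) :
    ∃ ε > 0, ∀ (δf : ℝ → E) (p q : ℝ → E), ContinuousOn δf (Icc 0 1) →
      (∀ t ∈ Icc (0:ℝ) 1, f (γ t) = p t) → (∀ t ∈ Icc (0:ℝ) 1, f (δf t) = q t) →
      δf 0 = γ 0 → (∀ t ∈ Icc (0:ℝ) 1, ‖p t - q t‖ ≤ ε) →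
      ∀ t ∈ Icc (0:ℝ) 1, ‖γ t - δf t‖ ≤ 2*M*‖p t - q t‖ := by
  classical
  have hM0 : (0:ℝ) < M := lt_of_lt_of_le one_pos hM
  choose r hr hanti hsurj using hkey
  set C : Set E := γ '' Icc 0 1 with hCdef
  have hCcomp : IsCompact C := isCompact_Icc.image_of_continuousOn hγc
  have hcov : C ⊆ ⋃ x ∈ C, ball x (r x / 2) := by
    intro z hz
    exact mem_biUnion hz (mem_ball_self (by linarith [hr z]))
  obtain ⟨sfin, hsub, hfin, hcov'⟩ :=
    hCcomp.elim_finite_subcover_image (fun x _ => isOpen_ball) hcov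
  have hγ0C : γ 0 ∈ C := mem_image_of_mem γ (left_mem_Icc.2 zero_le_one)
  have hγ0C' := hcov' hγ0C
  have hγ0C : γ 0 ∈ C := mem_image_of_mem γ (left_mem_Icc.2 zero_le_one)
  rw [mem_iUnion₂] at hγ0C'
  obtain ⟨x0, hx0s, _⟩ := hγ0C'
  have htfne : hfin.toFinset.Nonempty := ⟨x0, hfin.mem_toFinset.2 hx0s⟩
  set ρ : ℝ := hfin.toFinset.inf' htfne (fun x => r x / 2) with hρdef
  have hρpos : 0 < ρ := by
    rw [hρdef, Finset.lt_inf'_iff]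
    exact fun x _ => by linarith [hr x]
  have hρle : ∀ x ∈ sfin, ρ ≤ r x / 2 := fun x hx =>
    Finset.inf'_le _ (hfin.mem_toFinset.2 hx)
  have hgood : ∀ z ∈ C, ∃ x, closedBall z ρ ⊆ closedBall x (r x) ∧ z ∈ closedBall x (r x) := by
    intro z hz
    have hz' := hcov' hz
    rw [mem_iUnion₂] at hz'
    obtain ⟨x, hxs, hxb⟩ := hz'
    have h1 : dist z x < r x / 2 := mem_ball.1 hxb
    have h2 : ρ ≤ r x / 2 := hρle x hxs
    refine ⟨x, ?_, mem_closedBall.2 (by linarith)⟩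
    intro w hw
    rw [mem_closedBall] at hw ⊢
    calc dist w x ≤ dist w z + dist z x := dist_triangle _ _ _
      _ ≤ ρ + r x / 2 := add_le_add hw h1.le
      _ ≤ r x := by linarith
  refine ⟨ρ / (8*M), by positivity, ?_⟩
  intro δf p q hδc hγp hδq h0 hpq
  have himp : ∀ t ∈ Icc (0:ℝ) 1, ‖γ t - δf t‖ ≤ ρ → ‖γ t - δf t‖ ≤ 2*M*‖p t - q t‖ := by
    intro t ht hb
    obtain ⟨x, hball, hγmem⟩ := hgood (γ t) (mem_image_of_mem γ ht)
    have hδmem : δf t ∈ closedBall x (r x) := by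
      refine hball (mem_closedBall.2 ?_)
      rw [dist_eq_norm, norm_sub_rev]
      exact hb
    have h1 := hanti x (γ t) hγmem (δf t) hδmem
    rwa [hγp t ht, hδq t ht] at h1
  set S : Set ℝ := {T | T ∈ Icc (0:ℝ) 1 ∧ ∀ t ∈ Icc 0 T, ‖γ t - δf t‖ ≤ ρ/2} with hSdef
  have hS0 : (0:ℝ) ∈ S := by
    refine ⟨⟨le_rfl, zero_le_one⟩, fun t ht => ?_⟩
    have ht0 : t = 0 := le_antisymm ht.2 ht.1
    rw [ht0, h0, sub_self, norm_zero]
    positivity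
  have hSne : S.Nonempty := ⟨0, hS0⟩
  have hbdd : BddAbove S := ⟨1, fun t ht => ht.1.2⟩
  set τ := sSup S with hτdef
  have hτmem : τ ∈ Icc (0:ℝ) 1 := ⟨le_csSup hbdd hS0, csSup_le hSne fun t ht => ht.1.2⟩
  have hlt : ∀ s, 0 ≤ s → s < τ → ‖γ s - δf s‖ ≤ ρ/2 := by
    intro s hs0 hsτ
    obtain ⟨t, htS, hst⟩ := exists_lt_of_lt_csSup hSne hsτ
    exact htS.2 s ⟨hs0, hst.le⟩
  have hnc : ContinuousOn (fun t => ‖γ t - δf t‖) (Icc 0 1) := (hγc.sub hδc).norm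
  have hτb : ‖γ τ - δf τ‖ ≤ ρ/2 := by
    rcases eq_or_lt_of_le hτmem.1 with h0τ | h0τ
    · rw [← h0τ, h0, sub_self, norm_zero]; positivity
    · set u : ℕ → ℝ := fun n => τ - τ * (1 / (n + 1)) with hu
      have humem : ∀ n, u n ∈ Ico (0:ℝ) τ := by
        intro n
        have hpos : 0 < τ * (1 / (n + 1)) := by positivity
        have hle : τ * (1 / (n + 1)) ≤ τ := by
          have h3 : (1:ℝ) / (n + 1) ≤ 1 := by
            rw [div_le_one (by positivity)]; linarith [Nat.cast_nonneg (α := ℝ) n]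
          nlinarith
        constructor
        · show 0 ≤ τ - τ * (1 / (n + 1)); linarith
        · show τ - τ * (1 / (n + 1)) < τ; linarith
      have hulim : Tendsto u atTop (𝓝 τ) := by
        have h1 : Tendsto (fun n : ℕ => τ * (1 / (n + 1))) atTop (𝓝 (τ * 0)) :=
          tendsto_one_div_add_atTop_nhds_zero_nat.const_mul τ
        rw [mul_zero] at h1
        have h2 : Tendsto (fun n : ℕ => τ - τ * (1 / (n + 1))) atTop (𝓝 (τ - 0)) :=
          tendsto_const_nhds.sub h1
        rw [sub_zero] at h2; exact h2
      have humem' : ∀ n, u n ∈ Icc (0:ℝ) 1 :=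
        fun n => ⟨(humem n).1, le_trans (humem n).2.le hτmem.2⟩
      have hulim' : Tendsto u atTop (𝓝[Icc (0:ℝ) 1] τ) :=
        tendsto_nhdsWithin_of_tendsto_nhds_of_eventually_within u hulim
          (Eventually.of_forall humem')
      have t1 : Tendsto (fun n => ‖γ (u n) - δf (u n)‖) atTop (𝓝 (‖γ τ - δf τ‖)) :=
        ((hnc τ hτmem).tendsto).comp hulim'
      exact le_of_tendsto t1 (Eventually.of_forall fun n =>
        hlt (u n) (humem n).1 (humem n).2)
  have hτS : τ ∈ S := by
    refine ⟨hτmem, fun t ht => ?_⟩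
    rcases lt_or_ge t τ with h | h
    · exact hlt t ht.1 h
    · have : t = τ := le_antisymm ht.2 h
      rw [this]; exact hτb
  have hτ1 : τ = 1 := by
    by_contra hne'
    have hτlt : τ < 1 := lt_of_le_of_ne hτmem.2 hne'
    have himpτ : ‖γ τ - δf τ‖ ≤ ρ/4 := by
      have h1 := himp τ hτmem (le_trans hτb (by linarith))
      have h2 := hpq τ hτmem
      calc ‖γ τ - δf τ‖ ≤ 2*M*‖p τ - q τ‖ := h1
        _ ≤ 2*M*(ρ/(8*M)) := by
            apply mul_le_mul_of_nonneg_left h2 (by positivity)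
        _ = ρ/4 := by field_simp; ring
    have hc := hnc τ hτmem
    rw [Metric.continuousWithinAt_iff] at hc
    obtain ⟨δ', hδ', hb⟩ := hc (ρ/4) (by positivity)
    set t₀ := min 1 (τ + δ'/2) with ht₀
    have hτt₀ : τ < t₀ := lt_min hτlt (by linarith)
    have ht₀mem : t₀ ∈ Icc (0:ℝ) 1 := ⟨le_trans hτmem.1 hτt₀.le, min_le_left _ _⟩
    have ht₀S : t₀ ∈ S := by
      refine ⟨ht₀mem, fun t ht => ?_⟩
      rcases le_or_gt t τ with h | h
      · exact hτS.2 t ⟨ht.1, h⟩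
      · have htmem : t ∈ Icc (0:ℝ) 1 := ⟨ht.1, le_trans ht.2 ht₀mem.2⟩
        have hdt : dist t τ < δ' := by
          rw [Real.dist_eq, abs_of_pos (by linarith)]
          have : t ≤ τ + δ'/2 := le_trans ht.2 (min_le_right _ _)
          linarith
        have := hb htmem hdt
        rw [Real.dist_eq] at this
        have h3 : ‖γ t - δf t‖ - ‖γ τ - δf τ‖ < ρ/4 := by
          calc ‖γ t - δf t‖ - ‖γ τ - δf τ‖ ≤ |‖γ t - δf t‖ - ‖γ τ - δf τ‖| := le_abs_self _
            _ < ρ/4 := this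
        linarith
    exact absurd (le_csSup hbdd ht₀S) (not_le.2 hτt₀)
  intro t ht
  refine himp t ht (le_trans ?_ (by linarith : ρ/2 ≤ ρ))
  exact hτS.2 t ⟨ht.1, hτ1 ▸ ht.2⟩

theorem hadamardAux (f : E → E) (hf : ContDiff ℝ 1 f) (M : ℝ) (hM : 1 ≤ M)
    (hA : ∀ x : E, ∃ A : E ≃L[ℝ] E, HasFDerivAt f (A : E →L[ℝ] E) x ∧
      ‖(A.symm : E →L[ℝ] E)‖ ≤ M) :
    ∃ g : E → E, Function.LeftInverse g f ∧ Function.RightInverse g f ∧ ContDiff ℝ 1 g ∧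
      (∀ x, ‖fderiv ℝ g x‖ ≤ M) ∧ ∀ x y, ‖g x - g y‖ ≤ M * ‖x - y‖ := by
  classical
  have hM0 : (0:ℝ) < M := lt_of_lt_of_le one_pos hM
  rcases subsingleton_or_nontrivial E with hE | hE
  · refine ⟨id, fun x => Subsingleton.elim _ _, fun x => Subsingleton.elim _ _,
      contDiff_id, ?_, ?_⟩
    · intro x; rw [fderiv_id]; exact le_trans ContinuousLinearMap.norm_id_le hM
    · intro x y
      have hxy : x = y := Subsingleton.elim x y
      rw [hxy, sub_self, norm_zero, sub_self, norm_zero, mul_zero]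
  choose A hAd hAn using hA
  have hstrict : ∀ x, HasStrictFDerivAt f ((A x : E →L[ℝ] E)) x := fun x =>
    hf.contDiffAt.hasStrictFDerivAt' (hAd x) one_ne_zero
  have hfc : Continuous f := hf.continuous
  have hkey : ∀ x : E, ∃ r, 0 < r ∧
      (∀ u ∈ closedBall x r, ∀ w ∈ closedBall x r, ‖u - w‖ ≤ 2*M*‖f u - f w‖) ∧
      (∀ y ∈ closedBall (f x) (r/(2*M)), ∃ z ∈ closedBall x r, f z = y) := by
    intro x
    set c : ℝ≥0 := Real.toNNReal ((2*M)⁻¹) with hcdef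
    have hc0 : 0 < c := Real.toNNReal_pos.2 (by positivity)
    have hccoe : (c : ℝ) = (2*M)⁻¹ := Real.coe_toNNReal _ (by positivity)
    obtain ⟨s, hs, happrox⟩ := (hstrict x).approximates_deriv_on_nhds (Or.inr hc0)
    obtain ⟨ε, hε, hball⟩ := Metric.mem_nhds_iff.1 hs
    have hr : 0 < ε/2 := by positivity
    have hcb : closedBall x (ε/2) ⊆ s :=
      le_trans (closedBall_subset_ball (by linarith)) hball
    have happrox' : ApproximatesLinearOn f ((A x : E →L[ℝ] E)) (closedBall x (ε/2)) c :=
      happrox.mono_set hcb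
    set N := ‖((A x).symm : E →L[ℝ] E)‖₊ with hNdef
    have hNM : (N : ℝ) ≤ M := hAn x
    have hN0 : 0 < (N:ℝ) := by
      obtain ⟨z, hz⟩ := exists_ne (0 : E)
      have h1 : (A x).symm z ≠ 0 := by
        intro h
        apply hz
        have h2 := congrArg (A x) h
        rwa [(A x).apply_symm_apply, map_zero] at h2
      have h2 : 0 < ‖(A x).symm z‖ := norm_pos_iff.2 h1
      have h3 : ‖(A x).symm z‖ ≤ (N:ℝ) * ‖z‖ := ((A x).symm : E →L[ℝ] E).le_opNorm z
      by_contra hn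
      push_neg at hn
      have h4 : (N:ℝ) = 0 := le_antisymm hn N.coe_nonneg
      rw [h4, zero_mul] at h3
      linarith
    have hcN : c < N⁻¹ := by
      rw [← NNReal.coe_lt_coe, hccoe, NNReal.coe_inv]
      have : (N:ℝ) < 2*M := by linarith
      exact inv_strictAnti₀ hN0 this
    have hsubc : (2*M)⁻¹ ≤ (N:ℝ)⁻¹ - (2*M)⁻¹ := by
      have h2 : M⁻¹ ≤ (N:ℝ)⁻¹ := by
        apply inv_anti₀ hN0 hNM
      have h3 : M⁻¹ - (2*M)⁻¹ = (2*M)⁻¹ := by field_simp; ring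
      linarith
    have hanti := happrox'.antilipschitz (Or.inr hcN)
    have hKle : (((N⁻¹ - c : ℝ≥0) : ℝ))⁻¹ ≤ 2*M := by
      have hsub : ((N⁻¹ - c : ℝ≥0) : ℝ) = (N:ℝ)⁻¹ - (c:ℝ) := by
        rw [NNReal.coe_sub hcN.le, NNReal.coe_inv]
      rw [hsub, hccoe]
      calc ((N:ℝ)⁻¹ - (2*M)⁻¹)⁻¹ ≤ ((2*M)⁻¹)⁻¹ := by
            apply inv_anti₀ (by positivity) hsubc
        _ = 2*M := inv_inv _
    refine ⟨ε/2, hr, ?_, ?_⟩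
    · intro u hu w hw
      have h1 := hanti.le_mul_dist ⟨u, hu⟩ ⟨w, hw⟩
      simp only [Subtype.dist_eq, Set.restrict_apply] at h1
      rw [dist_eq_norm, dist_eq_norm] at h1
      refine h1.trans ?_
      rw [NNReal.coe_inv]
      exact mul_le_mul_of_nonneg_right hKle (norm_nonneg _)
    · intro y hy
      have hsurj := happrox'.surjOn_closedBall_of_nonlinearRightInverse
        (A x).toNonlinearRightInverse hr.le (subset_refl _)
      have hnn : (((A x).toNonlinearRightInverse.nnnorm : ℝ)) = (N:ℝ) := rfl
      have hrad : (ε/2)/(2*M) ≤ ((((A x).toNonlinearRightInverse.nnnorm : ℝ))⁻¹ - (c:ℝ)) * (ε/2) := by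
        rw [hnn, hccoe]
        calc (ε/2)/(2*M) = (2*M)⁻¹ * (ε/2) := by rw [div_eq_inv_mul]
          _ ≤ ((N:ℝ)⁻¹ - (2*M)⁻¹) * (ε/2) := mul_le_mul_of_nonneg_right hsubc hr.le
      have hy' : y ∈ closedBall (f x) (((((A x).toNonlinearRightInverse.nnnorm : ℝ))⁻¹ - (c:ℝ)) * (ε/2)) :=
        closedBall_subset_closedBall hrad hy
      obtain ⟨z, hz, hfz⟩ := hsurj hy'
      exact ⟨z, hz, hfz⟩
  have hloc : ∀ x : E, ∃ r, 0 < r ∧ Set.InjOn f (closedBall x r) := by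
    intro x
    obtain ⟨r, hr, ha, _⟩ := hkey x
    refine ⟨r, hr, fun u hu w hw hfe => ?_⟩
    have h1 := ha u hu w hw
    rw [hfe, sub_self, norm_zero, mul_zero] at h1
    exact sub_eq_zero.1 (norm_le_zero_iff.1 h1)
  have hlift : ∀ y : E, ∃ γ : ℝ → E, γ 0 = 0 ∧
      (∀ t ∈ Icc (0:ℝ) 1, f (γ t) = f 0 + t • (y - f 0)) ∧
      (∀ s ∈ Icc (0:ℝ) 1, ∀ t ∈ Icc (0:ℝ) 1, ‖γ s - γ t‖ ≤ 2*M*‖y - f 0‖*|s - t|) :=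
    fun y => hadamard_liftExists f hfc M hM hkey hloc 0 (y - f 0)
  choose Γ hΓ0 hΓf hΓlip using hlift
  set Φ : E → E := fun y => Γ y 1 with hΦdef
  have hfΦ : ∀ y, f (Φ y) = y := by
    intro y
    have h1 := hΓf y 1 ⟨zero_le_one, le_rfl⟩
    rw [one_smul, add_sub_cancel] at h1
    exact h1
  have hΦloclip : ∀ y, ∃ ε > 0, ∀ y', ‖y - y'‖ ≤ ε → ‖Φ y - Φ y'‖ ≤ 2*M*‖y - y'‖ := by
    intro y
    obtain ⟨ε, hε, hstab⟩ := hadamard_liftStable f M hM hkey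
      (hadamard_contOn_of_lip (L := 2*M*‖y - f 0‖) (by positivity) (hΓlip y))
    refine ⟨ε, hε, fun y' hyy' => ?_⟩
    have hmain := hstab (Γ y') (fun t => f 0 + t • (y - f 0)) (fun t => f 0 + t • (y' - f 0))
      (hadamard_contOn_of_lip (L := 2*M*‖y' - f 0‖) (by positivity) (hΓlip y'))
      (hΓf y) (hΓf y') ((hΓ0 y').trans (hΓ0 y).symm)
      (by
        intro t ht
        have h1 : (f 0 + t • (y - f 0)) - (f 0 + t • (y' - f 0)) = t • (y - y') := by
          rw [add_sub_add_left_eq_sub, ← smul_sub, sub_sub_sub_cancel_right]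
        rw [h1, norm_smul, Real.norm_eq_abs, abs_of_nonneg ht.1]
        calc t * ‖y - y'‖ ≤ 1 * ‖y - y'‖ :=
              mul_le_mul_of_nonneg_right ht.2 (norm_nonneg _)
          _ = ‖y - y'‖ := one_mul _
          _ ≤ ε := hyy')
      1 ⟨zero_le_one, le_rfl⟩
    have h2 : (f 0 + (1:ℝ) • (y - f 0)) - (f 0 + (1:ℝ) • (y' - f 0)) = y - y' := by
      rw [add_sub_add_left_eq_sub, ← smul_sub, sub_sub_sub_cancel_right, one_smul]
    rw [h2] at hmain
    exact hmain
  have hΦcont : Continuous Φ := by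
    rw [continuous_iff_continuousAt]
    intro y
    obtain ⟨ε, hε, hlip⟩ := hΦloclip y
    rw [Metric.continuousAt_iff]
    intro ε' hε'
    refine ⟨min ε (ε' / (2*M+1)), lt_min hε (by positivity), fun y' hy' => ?_⟩
    have h1 : ‖y - y'‖ ≤ ε := by
      rw [← norm_sub_rev, ← dist_eq_norm]
      exact le_trans hy'.le (min_le_left _ _)
    have h2 : ‖y - y'‖ ≤ ε' / (2*M+1) := by
      rw [← norm_sub_rev, ← dist_eq_norm]
      exact le_trans hy'.le (min_le_right _ _)
    rw [dist_eq_norm, norm_sub_rev]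
    calc ‖Φ y - Φ y'‖ ≤ 2*M*‖y - y'‖ := hlip y' h1
      _ ≤ 2*M*(ε' / (2*M+1)) := mul_le_mul_of_nonneg_left h2 (by positivity)
      _ < ε' := by
          rw [div_eq_mul_inv, ← mul_assoc]
          have h3 : 2*M*(2*M+1)⁻¹ < 1 := by
            rw [← div_eq_mul_inv, div_lt_one (by positivity)]; linarith
          calc 2*M*ε'*(2*M+1)⁻¹ = (2*M*(2*M+1)⁻¹)*ε' := by ring
            _ < 1*ε' := mul_lt_mul_of_pos_right h3 hε'
            _ = ε' := one_mul _
  have hleft : ∀ x, Φ (f x) = x := by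
    haveI : PreconnectedSpace E := ⟨(convex_univ (𝕜 := ℝ) (E := E)).isPreconnected⟩
    set Z : Set E := {x | Φ (f x) = x} with hZdef
    have hZc : IsClosed Z := isClosed_eq (hΦcont.comp hfc) continuous_id
    have hZ0 : (0:E) ∈ Z := by
      have huniq := hadamard_liftUnique f hloc
        (hadamard_contOn_of_lip (L := 2*M*‖f 0 - f 0‖) (by positivity) (hΓlip (f 0)))
        (continuousOn_const (c := (0:E)))
        (by
          intro t ht
          rw [hΓf (f 0) t ht, sub_self, smul_zero, add_zero])
        (hΓ0 (f 0)) zero_le_one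
      exact huniq 1 ⟨zero_le_one, le_rfl⟩
    have hZo : IsOpen Z := by
      rw [Metric.isOpen_iff]
      intro x hx
      obtain ⟨r, hr, ha, _⟩ := hkey x
      have hψc : ContinuousAt (fun w => Φ (f w)) x := (hΦcont.comp hfc).continuousAt
      rw [Metric.continuousAt_iff] at hψc
      obtain ⟨δ, hδ, hb⟩ := hψc r hr
      refine ⟨min δ r, lt_min hδ hr, fun x' hx' => ?_⟩
      rw [mem_ball] at hx'
      have hx'1 : dist x' x < δ := lt_of_lt_of_le hx' (min_le_left _ _)
      have hx'2 : x' ∈ closedBall x r :=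
        mem_closedBall.2 (le_of_lt (lt_of_lt_of_le hx' (min_le_right _ _)))
      have hΦx' : Φ (f x') ∈ closedBall x r := by
        have h1 := hb hx'1
        have hxZ : Φ (f x) = x := hx
        rw [hxZ] at h1
        exact mem_closedBall.2 h1.le
      have hfeq : f (Φ (f x')) = f x' := hfΦ (f x')
      have h2 := ha (Φ (f x')) hΦx' x' hx'2
      rw [hfeq, sub_self, norm_zero, mul_zero] at h2
      exact sub_eq_zero.1 (norm_le_zero_iff.1 h2)
    have hZuniv : Z = univ := IsClopen.eq_univ ⟨hZc, hZo⟩ ⟨0, hZ0⟩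
    intro x
    have : x ∈ Z := hZuniv ▸ mem_univ x
    exact this
  have hinj : Function.Injective f := fun a b hab => by
    rw [← hleft a, ← hleft b, hab]
  have hsmooth : ∀ y, ContDiffAt ℝ 1 Φ y ∧
      HasStrictFDerivAt Φ (((A (Φ y)).symm : E →L[ℝ] E)) y := by
    intro y
    have hfx : f (Φ y) = y := hfΦ y
    have hev : (hstrict (Φ y)).localInverse f (A (Φ y)) (Φ y) =ᶠ[𝓝 y] Φ := by
      have h1 := (hstrict (Φ y)).eventually_right_inverse
      rw [hfx] at h1
      refine h1.mono fun y' hy' => ?_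
      exact hinj (by rw [hfΦ y', hy'])
    constructor
    · have h2 := (hf.contDiffAt (x := Φ y)).to_localInverse (hAd (Φ y)) one_ne_zero
      rw [hfx] at h2
      exact h2.congr_of_eventuallyEq hev.symm
    · have h3 := (hstrict (Φ y)).to_localInverse
      rw [hfx] at h3
      exact h3.congr_of_eventuallyEq hev
  refine ⟨Φ, hleft, hfΦ, ?_, ?_, ?_⟩
  · rw [contDiff_iff_contDiffAt]
    exact fun y => (hsmooth y).1
  · intro y
    rw [((hsmooth y).2).hasFDerivAt.fderiv]
    exact hAn _
  · intro a b
    have hdiff : ∀ y ∈ (univ : Set E), DifferentiableAt ℝ Φ y := fun y _ =>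
      ((hsmooth y).2).differentiableAt
    have hbound : ∀ y ∈ (univ : Set E), ‖fderiv ℝ Φ y‖ ≤ M := fun y _ => by
      rw [((hsmooth y).2).hasFDerivAt.fderiv]
      exact hAn _
    exact (convex_univ).norm_image_sub_le_of_norm_fderiv_le hdiff hbound
      (mem_univ b) (mem_univ a)

end Hadamard

/-- If `h : ℝ^d → ℝ^d` is `C¹` with linear growth `|h(x)| ≤ K(1+|x|)` and,
whenever `|∇h(x)| > η`, the matrix `I + ∇h(x)` is invertible with `|(I+∇h(x))⁻¹| ≤ N_κ`,
then `h̃(x) = x + h(x)` is a diffeomorphism of `ℝ^d` whose inverse `g` is `N̄`-Lipschitz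
(with `N̄ = max((1−η)⁻¹, N_κ)`), `|∇g(x)| ≤ N̄`, and `|g(x)| ≤ N̄K + N̄|x|`. -/
theorem stmt_5 (d : ℕ) (hd : 1 ≤ d)
    (h : EuclideanSpace ℝ (Fin d) → EuclideanSpace ℝ (Fin d)) (hC1 : ContDiff ℝ 1 h)
    (K η Nκ : ℝ) (hK : 0 ≤ K) (hη : η ∈ Set.Ioo (0 : ℝ) 1) (hNκ : 0 < Nκ)
    (hgrowth : ∀ x, ‖h x‖ ≤ K * (1 + ‖x‖))
    (hinv : ∀ x, η < ‖fderiv ℝ h x‖ →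
      ∃ u : EuclideanSpace ℝ (Fin d) ≃L[ℝ] EuclideanSpace ℝ (Fin d),
        (u : EuclideanSpace ℝ (Fin d) →L[ℝ] EuclideanSpace ℝ (Fin d)) =
          ContinuousLinearMap.id ℝ (EuclideanSpace ℝ (Fin d)) + fderiv ℝ h x ∧
        ‖(u.symm : EuclideanSpace ℝ (Fin d) →L[ℝ] EuclideanSpace ℝ (Fin d))‖ ≤ Nκ) :
    ∃ g : EuclideanSpace ℝ (Fin d) → EuclideanSpace ℝ (Fin d),
      Function.LeftInverse g (fun x => x + h x) ∧
      Function.RightInverse g (fun x => x + h x) ∧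
      ContDiff ℝ 1 g ∧
      (∀ x y, ‖g x - g y‖ ≤ max (1 - η)⁻¹ Nκ * ‖x - y‖) ∧
      (∀ x, ‖fderiv ℝ g x‖ ≤ max (1 - η)⁻¹ Nκ) ∧
      (∀ x, ‖g x‖ ≤ max (1 - η)⁻¹ Nκ * K + max (1 - η)⁻¹ Nκ * ‖x‖) := by
  classical
  obtain ⟨hη0, hη1⟩ := hη
  haveI : Nonempty (Fin d) := ⟨⟨0, hd⟩⟩
  haveI : Nontrivial (EuclideanSpace ℝ (Fin d)) := inferInstance
  set f : EuclideanSpace ℝ (Fin d) → EuclideanSpace ℝ (Fin d) := fun x => x + h x with hfdef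
  have hfC1 : ContDiff ℝ 1 f := contDiff_id.add hC1
  set M : ℝ := max (1 - η)⁻¹ Nκ with hMdef
  have hsub : (0:ℝ) < 1 - η := by linarith
  have h1η : 1 ≤ (1 - η)⁻¹ := by
    have hmul := mul_inv_cancel₀ (ne_of_gt hsub)
    nlinarith [inv_nonneg.2 hsub.le]
  have hM : 1 ≤ M := le_trans h1η (le_max_left _ _)
  have hA : ∀ x : EuclideanSpace ℝ (Fin d), ∃ A : EuclideanSpace ℝ (Fin d) ≃L[ℝ] EuclideanSpace ℝ (Fin d),
      HasFDerivAt f (A : EuclideanSpace ℝ (Fin d) →L[ℝ] EuclideanSpace ℝ (Fin d)) x ∧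
      ‖(A.symm : EuclideanSpace ℝ (Fin d) →L[ℝ] EuclideanSpace ℝ (Fin d))‖ ≤ M := by
    intro x
    have hdh : HasFDerivAt h (fderiv ℝ h x) x :=
      (hC1.differentiable one_ne_zero x).hasFDerivAt
    have hF : HasFDerivAt f (ContinuousLinearMap.id ℝ (EuclideanSpace ℝ (Fin d)) + fderiv ℝ h x) x :=
      (hasFDerivAt_id x).add hdh
    rcases le_or_gt ‖fderiv ℝ h x‖ η with hle | hlt
    · -- small derivative: geometric series
      set t : EuclideanSpace ℝ (Fin d) →L[ℝ] EuclideanSpace ℝ (Fin d) := fderiv ℝ h x with htdef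
      have hnt : ‖-t‖ < 1 := by rw [norm_neg]; linarith
      set unit : (EuclideanSpace ℝ (Fin d) →L[ℝ] EuclideanSpace ℝ (Fin d))ˣ := Units.oneSub (-t) hnt with hunitdef
      set A := ContinuousLinearEquiv.ofUnit unit with hAdef
      have hcoe : (A : EuclideanSpace ℝ (Fin d) →L[ℝ] EuclideanSpace ℝ (Fin d)) = ContinuousLinearMap.id ℝ (EuclideanSpace ℝ (Fin d)) + t := by
        have h1 : (A : EuclideanSpace ℝ (Fin d) →L[ℝ] EuclideanSpace ℝ (Fin d)) = unit.val := rfl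
        rw [h1, hunitdef, Units.val_oneSub, sub_neg_eq_add]
        rfl
      have hsymm : (A.symm : EuclideanSpace ℝ (Fin d) →L[ℝ] EuclideanSpace ℝ (Fin d)) = unit.inv := by
        ext z; rfl
      refine ⟨A, by rw [hcoe]; exact hF, ?_⟩
      rw [hsymm]
      have h2 : unit.inv = ∑' n : ℕ, (-t) ^ n := rfl
      rw [h2]
      have h3 := tsum_geometric_le_of_norm_lt_one (-t) hnt
      rw [ContinuousLinearMap.one_def, ContinuousLinearMap.norm_id] at h3
      have h4 : (1:ℝ) - 1 + (1 - ‖-t‖)⁻¹ = (1 - ‖-t‖)⁻¹ := by ring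
      rw [h4] at h3
      refine h3.trans (le_trans ?_ (le_max_left _ _))
      rw [norm_neg]
      apply inv_anti₀ hsub
      linarith
    · obtain ⟨u, hueq, hunorm⟩ := hinv x hlt
      exact ⟨u, by rw [hueq]; exact hF, le_trans hunorm (le_max_right _ _)⟩
  obtain ⟨g, hgl, hgr, hgC1, hgd, hglip⟩ := hadamardAux f hfC1 M hM hA
  refine ⟨g, hgl, hgr, hgC1, hglip, hgd, ?_⟩
  intro x
  have hg0 : g (f 0) = 0 := hgl 0
  have hf0 : ‖f 0‖ ≤ K := by
    have : f 0 = h 0 := by rw [hfdef]; simp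
    rw [this]
    have := hgrowth 0
    rwa [norm_zero, add_zero, mul_one] at this
  calc ‖g x‖ = ‖g x - g (f 0)‖ := by rw [hg0, sub_zero]
    _ ≤ M * ‖x - f 0‖ := hglip x (f 0)
    _ ≤ M * (‖x‖ + ‖f 0‖) := by
        apply mul_le_mul_of_nonneg_left (norm_sub_le _ _) (by linarith)
    _ ≤ M * (‖x‖ + K) := by
        apply mul_le_mul_of_nonneg_left (by linarith) (by linarith)
    _ = M * K + M * ‖x‖ := by ring
end

section
/- Let d ≥ 1, n ≥ 1, and let f : ℝ^d → ℝ^d be an n-times continuously differentiable diffeomorphism of ℝ^d (so f is a bijection, f and f^{−1} are C^n, and ∇f(x) is invertible for every x). Then for every multi-index γ with 1 ≤ |γ| ≤ n, each component of ∂^γ (f^{−1})(x) equals P evaluated at the entries of the matrix [∇f(f^{−1}(x))]^{−1} and the entries of the derivatives ∂^{γ'} ∇f(f^{−1}(x)) over all multi-indices γ' with 1 ≤ |γ'| ≤ |γ| − 1, where P is a polynomial with real coefficients depending only on d and γ (and not on f or x). In particular, ∇(f^{−1})(x) = [∇f(f^{−1}(x))]^{−1}. -/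
/-- The partial derivative `∂ᵢ g` of a scalar function `g : ℝ^d → ℝ`. -/
noncomputable def pd {d : ℕ} (i : Fin d) (g : (Fin d → ℝ) → ℝ) : (Fin d → ℝ) → ℝ :=
  fun x => fderiv ℝ g x (Pi.single i 1)

/-- The multi-index derivative `∂^γ g = ∂₁^{γ₁} ⋯ ∂_d^{γ_d} g`. -/
noncomputable def mderiv {d : ℕ} (γ : Fin d → ℕ) (g : (Fin d → ℝ) → ℝ) :
    (Fin d → ℝ) → ℝ :=
  (List.finRange d).foldr (fun i acc => (pd i)^[γ i] acc) g

/-- The Jacobian matrix `∇f(x) = (∂ⱼ f^i(x))_{i,j}` of `f : ℝ^d → ℝ^d`. -/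
noncomputable def jac {d : ℕ} (f : (Fin d → ℝ) → (Fin d → ℝ)) (x : Fin d → ℝ) :
    Matrix (Fin d) (Fin d) ℝ :=
  Matrix.of fun i j => pd j (fun y => f y i) x

namespace Stmt7aux

variable {d : ℕ}

lemma pd_apply (i : Fin d) (g : (Fin d → ℝ) → ℝ) (x : Fin d → ℝ) :
    pd i g x = fderiv ℝ g x (Pi.single i 1) := rfl

lemma contDiff_pd {r : ℕ} {g : (Fin d → ℝ) → ℝ} (hg : ContDiff ℝ ((r + 1 : ℕ)) g) (i : Fin d) :
    ContDiff ℝ (r : ℕ) (pd i g) := by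
  have h1 : ContDiff ℝ (r : ℕ) (fderiv ℝ g) := hg.fderiv_right (by norm_cast)
  exact (ContinuousLinearMap.apply ℝ ℝ (Pi.single i 1 : Fin d → ℝ)).contDiff.comp h1

lemma cd_mono {a b : ℕ} (h : a ≤ b) {g : (Fin d → ℝ) → ℝ} (hg : ContDiff ℝ (b : ℕ) g) :
    ContDiff ℝ (a : ℕ) g := hg.of_le (by exact_mod_cast h)

lemma cd_diff {a : ℕ} (h : 1 ≤ a) {g : (Fin d → ℝ) → ℝ} (hg : ContDiff ℝ (a : ℕ) g) :
    Differentiable ℝ g := hg.differentiable (by norm_cast; omega)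

lemma fderiv_clm_comp {F : (Fin d → ℝ) → ((Fin d → ℝ) →L[ℝ] ℝ)} {x : Fin d → ℝ}
    (hF : DifferentiableAt ℝ F x) (v : Fin d → ℝ) :
    fderiv ℝ (fun y => F y v) x
      = (ContinuousLinearMap.apply ℝ ℝ v).comp (fderiv ℝ F x) :=
  ((ContinuousLinearMap.apply ℝ ℝ v).hasFDerivAt.comp x hF.hasFDerivAt).fderiv

lemma pd_comm {g : (Fin d → ℝ) → ℝ} {r : ℕ} (hr : 2 ≤ r) (hg : ContDiff ℝ (r : ℕ) g)
    (a b : Fin d) : pd a (pd b g) = pd b (pd a g) := by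
  funext x
  have hg2 : ContDiff ℝ ((2:ℕ)) g := cd_mono hr hg
  have hd1 : Differentiable ℝ g := hg2.differentiable (by norm_num)
  have hdf : Differentiable ℝ (fderiv ℝ g) := by
    have : ContDiff ℝ ((1:ℕ)) (fderiv ℝ g) := hg2.fderiv_right (by norm_cast)
    exact this.differentiable (by norm_num)
  have h1 : ∀ (u v : Fin d), pd u (pd v g) x
      = fderiv ℝ (fderiv ℝ g) x (Pi.single u 1) (Pi.single v 1) := by
    intro u v
    rw [pd_apply]
    have : pd v g = fun y => fderiv ℝ g y (Pi.single v 1) := rfl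
    rw [this, fderiv_clm_comp (hdf x) (Pi.single v 1)]
    rfl
  rw [h1, h1]
  exact second_derivative_symmetric (fun y => (hd1 y).hasFDerivAt)
    ((hdf x).hasFDerivAt) _ _

/-! ### foldr machinery -/

noncomputable def mdl (L : List (Fin d)) (γ : Fin d → ℕ) (g : (Fin d → ℝ) → ℝ) :
    (Fin d → ℝ) → ℝ :=
  L.foldr (fun i acc => (pd i)^[γ i] acc) g

lemma mderiv_eq_mdl (γ : Fin d → ℕ) (g : (Fin d → ℝ) → ℝ) :
    mderiv γ g = mdl (List.finRange d) γ g := rfl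

lemma mdl_cons (i : Fin d) (L : List (Fin d)) (γ : Fin d → ℕ) (g : (Fin d → ℝ) → ℝ) :
    mdl (i :: L) γ g = (pd i)^[γ i] (mdl L γ g) := rfl

lemma contDiff_iter {r k : ℕ} {g : (Fin d → ℝ) → ℝ} (hg : ContDiff ℝ ((r + k : ℕ)) g)
    (i : Fin d) : ContDiff ℝ (r : ℕ) ((pd i)^[k] g) := by
  induction k generalizing g with
  | zero => simpa using hg
  | succ k ih =>
    rw [Function.iterate_succ_apply]
    exact ih (contDiff_pd (by rw [show r + (k+1) = (r + k) + 1 from by ring] at hg; exact hg) i)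

lemma contDiff_mdl {r : ℕ} (L : List (Fin d)) (γ : Fin d → ℕ) {g : (Fin d → ℝ) → ℝ}
    (hg : ContDiff ℝ ((r + (L.map γ).sum : ℕ)) g) : ContDiff ℝ (r : ℕ) (mdl L γ g) := by
  induction L generalizing r with
  | nil => simpa [mdl] using hg
  | cons i L ih =>
    rw [mdl_cons]
    refine contDiff_iter (ih ?_) i
    have h : (r + γ i) + (L.map γ).sum = r + ((i :: L).map γ).sum := by
      simp [List.map_cons]; ring
    rw [h]; exact hg

lemma iter_pd_comm {k : ℕ} {g : (Fin d → ℝ) → ℝ} (hg : ContDiff ℝ ((k + 1 : ℕ)) g)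
    (a i : Fin d) : pd a ((pd i)^[k] g) = (pd i)^[k] (pd a g) := by
  induction k generalizing g with
  | zero => simp
  | succ k ih =>
    rw [Function.iterate_succ_apply, Function.iterate_succ_apply]
    have hg' : ContDiff ℝ ((k + 1 : ℕ)) (pd i g) := contDiff_pd hg i
    rw [ih hg', pd_comm (by omega) hg a i]

lemma mdl_pd_comm (L : List (Fin d)) (γ : Fin d → ℕ) {g : (Fin d → ℝ) → ℝ}
    (hg : ContDiff ℝ (((L.map γ).sum + 1 : ℕ)) g) (a : Fin d) :
    pd a (mdl L γ g) = mdl L γ (pd a g) := by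
  induction L generalizing g with
  | nil => rfl
  | cons i L ih =>
    rw [mdl_cons, mdl_cons]
    have h1 : ContDiff ℝ ((γ i + 1 : ℕ)) (mdl L γ g) := by
      refine contDiff_mdl L γ ?_
      refine cd_mono ?_ hg
      simp only [List.map_cons, List.sum_cons]; omega
    rw [iter_pd_comm h1 a i]
    congr 1
    exact ih (cd_mono (by simp only [List.map_cons, List.sum_cons]; omega) hg)

lemma mdl_congr {L : List (Fin d)} {γ1 γ2 : Fin d → ℕ} (h : ∀ j ∈ L, γ1 j = γ2 j)
    (g : (Fin d → ℝ) → ℝ) : mdl L γ1 g = mdl L γ2 g := by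
  induction L with
  | nil => rfl
  | cons i L ih =>
    rw [mdl_cons, mdl_cons, h i (by simp), ih (fun j hj => h j (by simp [hj]))]

lemma mdl_zero {L : List (Fin d)} {γ : Fin d → ℕ} (h : ∀ j ∈ L, γ j = 0)
    (g : (Fin d → ℝ) → ℝ) : mdl L γ g = g := by
  induction L with
  | nil => rfl
  | cons i L ih => rw [mdl_cons, h i (by simp), ih (fun j hj => h j (by simp [hj]))]; rfl

lemma mdl_update (L : List (Fin d)) (γ : Fin d → ℕ) (a : Fin d) (haL : a ∈ L)
    (hnd : L.Nodup) {g : (Fin d → ℝ) → ℝ}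
    (hg : ContDiff ℝ (((L.map γ).sum + 1 : ℕ)) g) :
    mdl L (Function.update γ a (γ a + 1)) g = mdl L γ (pd a g) := by
  induction L generalizing g with
  | nil => simp at haL
  | cons i L ih =>
    rcases List.nodup_cons.mp hnd with ⟨hiL, hndL⟩
    rw [mdl_cons, mdl_cons]
    by_cases hia : i = a
    · subst hia
      have hL : mdl L (Function.update γ i (γ i + 1)) g = mdl L γ g :=
        mdl_congr (fun j hj => Function.update_of_ne (by rintro rfl; exact hiL hj) _ _) g
      rw [Function.update_self, hL, Function.iterate_succ_apply]
      congr 1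
      exact mdl_pd_comm L γ (cd_mono (by simp only [List.map_cons, List.sum_cons]; omega) hg) i
    · rw [Function.update_of_ne (Ne.symm ?hne) _ _]
      case hne => exact fun h => hia h.symm
      have haL' : a ∈ L := by
        rcases List.mem_cons.mp haL with h | h
        · exact absurd h.symm hia
        · exact h
      rw [ih haL' hndL (cd_mono (by simp only [List.map_cons, List.sum_cons]; omega) hg)]

/-! ### mderiv-level lemmas -/

lemma sum_eq_listsum (γ : Fin d → ℕ) : ∑ i, γ i = ((List.finRange d).map γ).sum :=
  Fin.sum_univ_def γ

lemma contDiff_mderiv {r : ℕ} (γ : Fin d → ℕ) {g : (Fin d → ℝ) → ℝ}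
    (hg : ContDiff ℝ ((r + ∑ i, γ i : ℕ)) g) : ContDiff ℝ (r : ℕ) (mderiv γ g) := by
  rw [mderiv_eq_mdl]
  exact contDiff_mdl _ _ (by rw [← sum_eq_listsum]; exact hg)

lemma pd_mderiv (γ : Fin d → ℕ) (a : Fin d) {g : (Fin d → ℝ) → ℝ}
    (hg : ContDiff ℝ (((∑ i, γ i) + 1 : ℕ)) g) :
    pd a (mderiv γ g) = mderiv γ (pd a g) := by
  rw [mderiv_eq_mdl, mderiv_eq_mdl]
  exact mdl_pd_comm _ _ (by rw [← sum_eq_listsum]; exact hg) a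

lemma mderiv_update (γ : Fin d → ℕ) (a : Fin d) {g : (Fin d → ℝ) → ℝ}
    (hg : ContDiff ℝ (((∑ i, γ i) + 1 : ℕ)) g) :
    mderiv (Function.update γ a (γ a + 1)) g = mderiv γ (pd a g) := by
  rw [mderiv_eq_mdl, mderiv_eq_mdl]
  exact mdl_update _ _ _ (List.mem_finRange a) (List.nodup_finRange d)
    (by rw [← sum_eq_listsum]; exact hg)

lemma mderiv_zero {γ : Fin d → ℕ} (h : ∀ j, γ j = 0) (g : (Fin d → ℝ) → ℝ) :
    mderiv γ g = g := by
  rw [mderiv_eq_mdl]; exact mdl_zero (fun j _ => h j) g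

lemma mderiv_peel (γ : Fin d → ℕ) (a : Fin d) (ha : 1 ≤ γ a) {g : (Fin d → ℝ) → ℝ}
    (hg : ContDiff ℝ ((∑ i, γ i : ℕ)) g) :
    mderiv γ g = pd a (mderiv (Function.update γ a (γ a - 1)) g) := by
  set γ' := Function.update γ a (γ a - 1) with hγ'
  have h1 : γ = Function.update γ' a (γ' a + 1) := by
    funext j
    by_cases hj : j = a
    · subst hj; simp [hγ', Function.update_self]; omega
    · simp [hγ', Function.update_of_ne hj]
  have hs : (∑ i, γ' i) + 1 = ∑ i, γ i := by
    have h2 : ∑ i, γ' i = (γ a - 1) + ∑ i ∈ Finset.univ \ {a}, γ i := by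
      rw [hγ']
      rw [Finset.sum_update_of_mem (Finset.mem_univ a)]
    have h3 : γ a + ∑ i ∈ Finset.univ.erase a, γ i = ∑ i, γ i :=
      Finset.add_sum_erase _ _ (Finset.mem_univ a)
    rw [h2]
    rw [show Finset.univ \ {a} = Finset.univ.erase a from by ext; simp [Finset.mem_erase, and_comm]]
    omega
  have hg' : ContDiff ℝ (((∑ i, γ' i) + 1 : ℕ)) g := by rw [hs]; exact hg
  rw [h1, mderiv_update γ' a hg', pd_mderiv γ' a hg']

lemma mderiv_single (a : Fin d) {g : (Fin d → ℝ) → ℝ} (hg : ContDiff ℝ ((1:ℕ)) g) :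
    mderiv (Pi.single a 1) g = pd a g := by
  have h0 : (Pi.single a 1 : Fin d → ℕ) = Function.update (fun _ => 0) a ((fun _ : Fin d => (0:ℕ)) a + 1) := by
    funext j
    by_cases hj : j = a
    · subst hj; simp
    · simp [Pi.single_apply, hj, Function.update_of_ne hj]
  rw [h0, mderiv_update (fun _ => 0) a (by simpa using hg), mderiv_zero (fun _ => rfl)]

/-! ### chain rule -/

lemma pd_component (g : (Fin d → ℝ) → (Fin d → ℝ)) (m i : Fin d) (x : Fin d → ℝ)
    (hg : DifferentiableAt ℝ g x) :
    pd i (fun y => g y m) x = fderiv ℝ g x (Pi.single i 1) m := by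
  have h : (fun y => g y m)
      = fun y => (ContinuousLinearMap.proj (R := ℝ) (φ := fun _ : Fin d => ℝ) m) (g y) := rfl
  rw [pd_apply, h, show (fun y => (ContinuousLinearMap.proj (R := ℝ) (φ := fun _ : Fin d => ℝ) m) (g y))
      = (⇑(ContinuousLinearMap.proj (R := ℝ) (φ := fun _ : Fin d => ℝ) m)) ∘ g from rfl,
    ((ContinuousLinearMap.proj (R := ℝ) (φ := fun _ : Fin d => ℝ) m).hasFDerivAt.comp x
      hg.hasFDerivAt).fderiv]
  rfl

lemma pd_comp (h : (Fin d → ℝ) → ℝ) (g : (Fin d → ℝ) → (Fin d → ℝ)) (i : Fin d)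
    (x : Fin d → ℝ) (hh : DifferentiableAt ℝ h (g x)) (hg : DifferentiableAt ℝ g x) :
    pd i (fun y => h (g y)) x
      = ∑ m, pd m h (g x) * pd i (fun y => g y m) x := by
  have hc : pd i (fun y => h (g y)) x = fderiv ℝ h (g x) (fderiv ℝ g x (Pi.single i 1)) := by
    rw [pd_apply, show (fun y => h (g y)) = h ∘ g from rfl, fderiv_comp x hh hg]
    rfl
  set v := fderiv ℝ g x (Pi.single i 1) with hv
  have hvdec : v = ∑ m, (v m) • (Pi.single m 1 : Fin d → ℝ) := by
    funext j
    simp [Finset.sum_apply, Pi.single_apply, mul_comm]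
  rw [hc, hvdec, map_sum]
  refine Finset.sum_congr rfl fun m _ => ?_
  rw [ContinuousLinearMap.map_smul]
  rw [pd_component g m i x hg, ← hv]
  simp [pd_apply, smul_eq_mul, mul_comm]

/-! ### pointwise calculus rules -/

lemma pd_const (i : Fin d) (c : ℝ) (x : Fin d → ℝ) : pd i (fun _ => c) x = 0 := by
  simp [pd_apply, fderiv_const]

lemma pd_add (i : Fin d) {F G : (Fin d → ℝ) → ℝ} {x : Fin d → ℝ}
    (hF : DifferentiableAt ℝ F x) (hG : DifferentiableAt ℝ G x) :
    pd i (fun z => F z + G z) x = pd i F x + pd i G x := by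
  simp [pd_apply, fderiv_fun_add hF hG]

lemma pd_mul (i : Fin d) {F G : (Fin d → ℝ) → ℝ} {x : Fin d → ℝ}
    (hF : DifferentiableAt ℝ F x) (hG : DifferentiableAt ℝ G x) :
    pd i (fun z => F z * G z) x = F x * pd i G x + pd i F x * G x := by
  rw [pd_apply, fderiv_fun_mul hF hG]
  simp [pd_apply, smul_eq_mul, mul_comm]

lemma pd_sum (i : Fin d) {s : Finset (Fin d)} {F : Fin d → (Fin d → ℝ) → ℝ} {x : Fin d → ℝ}
    (hF : ∀ c ∈ s, DifferentiableAt ℝ (F c) x) :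
    pd i (fun z => ∑ c ∈ s, F c z) x = ∑ c ∈ s, pd i (F c) x := by
  simp [pd_apply, fderiv_fun_sum hF]

/-! ### Jacobian lemmas -/

lemma jac_apply (f : (Fin d → ℝ) → (Fin d → ℝ)) (x : Fin d → ℝ) (a b : Fin d) :
    jac f x a b = pd b (fun y => f y a) x := rfl

lemma diff_comp_proj {r : ℕ} {f : (Fin d → ℝ) → (Fin d → ℝ)} (hf : ContDiff ℝ (r : ℕ) f)
    (a : Fin d) : ContDiff ℝ (r : ℕ) (fun y => f y a) :=
  (ContinuousLinearMap.proj (R := ℝ) (φ := fun _ : Fin d => ℝ) a).contDiff.comp hf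

lemma jac_comp_eq_one {f g : (Fin d → ℝ) → (Fin d → ℝ)} (hfg : ∀ x, f (g x) = x)
    (hf : Differentiable ℝ f) (hg : Differentiable ℝ g) (x : Fin d → ℝ) :
    jac f (g x) * jac g x = 1 := by
  ext a b
  rw [Matrix.mul_apply]
  have hchain : pd b (fun y => f (g y) a) x
      = ∑ c, pd c (fun y => f y a) (g x) * pd b (fun y => g y c) x := by
    have h1 : (fun y => f (g y) a) = fun y => (fun z => f z a) (g y) := rfl
    rw [h1]
    exact pd_comp (fun z => f z a) g b x
      (((ContinuousLinearMap.proj (R := ℝ) (φ := fun _ : Fin d => ℝ) a).differentiable.comp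
        hf) (g x)) (hg x)
  have h2 : (fun y => f (g y) a) = fun y : Fin d → ℝ => y a := by
    funext y; rw [hfg y]
  rw [h2] at hchain
  have h3 : pd b (fun y : Fin d → ℝ => y a) x = (1 : Matrix (Fin d) (Fin d) ℝ) a b := by
    have h4 : (fun y : Fin d → ℝ => y a)
        = fun y => (ContinuousLinearMap.proj (R := ℝ) (φ := fun _ : Fin d => ℝ) a) y := rfl
    rw [pd_apply, h4, ContinuousLinearMap.fderiv]
    simp [Pi.single_apply, Matrix.one_apply, eq_comm]
  simp only [jac_apply]
  rw [← hchain, h3]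

lemma jac_g_eq_inv {n : ℕ} (hn : 1 ≤ n) {f g : (Fin d → ℝ) → (Fin d → ℝ)}
    (hfg : ∀ x, f (g x) = x) (hf : ContDiff ℝ (n : ℕ) f) (hg : ContDiff ℝ (n : ℕ) g)
    (x : Fin d → ℝ) : jac g x = (jac f (g x))⁻¹ :=
  (Matrix.inv_eq_right_inv (jac_comp_eq_one hfg
    (hf.differentiable (by norm_cast; omega)) (hg.differentiable (by norm_cast; omega)) x)).symm

/-! ### the polynomial index types and valuation -/

variable (d) in
abbrev Idx (m : ℕ) : Type :=
  (Fin d × Fin d) ⊕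
    ({γ' : Fin d → ℕ // 1 ≤ ∑ i, γ' i ∧ ∑ i, γ' i ≤ m} × (Fin d × Fin d))

variable (d) in
noncomputable def Vv (m : ℕ) (f g : (Fin d → ℝ) → (Fin d → ℝ)) (x : Fin d → ℝ) :
    Idx d m → ℝ :=
  Sum.elim (fun ij : Fin d × Fin d => (jac f (g x))⁻¹ ij.1 ij.2)
    (fun t => mderiv t.1.1 (pd t.2.2 (fun y => f y t.2.1)) (g x))

variable (d) in
def incl (m : ℕ) : Idx d m → Idx d (m + 1) :=
  Sum.map id (Prod.map (fun t => ⟨t.1, t.2.1, t.2.2.trans (Nat.le_succ m)⟩) id)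

lemma Vv_incl (m : ℕ) (f g : (Fin d → ℝ) → (Fin d → ℝ)) (x : Fin d → ℝ) (s : Idx d m) :
    Vv d (m + 1) f g x (incl d m s) = Vv d m f g x s := by
  cases s with
  | inl ij => rfl
  | inr t => rfl

section Main

variable {n : ℕ} {f g : (Fin d → ℝ) → (Fin d → ℝ)}

/-- All the running hypotheses. -/
structure Hyp (n : ℕ) (f g : (Fin d → ℝ) → (Fin d → ℝ)) : Prop where
  hfg : ∀ x, f (g x) = x
  hf : ContDiff ℝ (n : ℕ) f
  hg : ContDiff ℝ (n : ℕ) g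
  hU : ∀ x, IsUnit (jac f x)
  hn : 1 ≤ n

namespace Hyp

variable (H : Hyp n f g)
include H

lemma jacg (x : Fin d → ℝ) : jac g x = (jac f (g x))⁻¹ :=
  jac_g_eq_inv H.hn H.hfg H.hf H.hg x

lemma cd_pdf (c e : Fin d) : ContDiff ℝ ((n - 1 : ℕ)) (pd e (fun y => f y c)) := by
  have := contDiff_pd (g := fun y => f y c) (r := n - 1) ?_ e
  · exact this
  · have h : n - 1 + 1 = n := by have := H.hn; omega
    rw [h]; exact diff_comp_proj H.hf c

lemma cd_pdg (c e : Fin d) : ContDiff ℝ ((n - 1 : ℕ)) (pd e (fun y => g y c)) := by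
  have := contDiff_pd (g := fun y => g y c) (r := n - 1) ?_ e
  · exact this
  · have h : n - 1 + 1 = n := by have := H.hn; omega
    rw [h]; exact diff_comp_proj H.hg c

/-- inverse-jacobian entries as derivatives of `g`. -/
lemma inv_entry (a b : Fin d) :
    (fun x => (jac f (g x))⁻¹ a b) = pd b (fun y => g y a) := by
  funext z
  rw [← H.jacg z, jac_apply]

lemma diffg : Differentiable ℝ g := H.hg.differentiable (by have := H.hn; norm_cast; omega)

lemma cd_mderiv_pdf (t : Fin d → ℕ) (c e : Fin d) {r : ℕ} (hr : r + 1 + ∑ i, t i ≤ n) :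
    ContDiff ℝ (r : ℕ) (mderiv t (pd e (fun y => f y c))) := by
  refine contDiff_mderiv t (cd_mono ?_ (H.cd_pdf c e))
  omega

lemma diffV {m : ℕ} (hmn : m + 2 ≤ n) (s : Idx d m) :
    Differentiable ℝ (fun x => Vv d m f g x s) := by
  cases s with
  | inl ij =>
    have h : (fun x => Vv d m f g x (Sum.inl ij)) = pd ij.2 (fun y => g y ij.1) :=
      H.inv_entry ij.1 ij.2
    rw [h]
    exact cd_diff (by omega) (H.cd_pdg ij.1 ij.2)
  | inr t =>
    have h : (fun x => Vv d m f g x (Sum.inr t))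
        = fun x => mderiv t.1.1 (pd t.2.2 (fun y => f y t.2.1)) (g x) := rfl
    rw [h]
    have h1 : Differentiable ℝ (mderiv t.1.1 (pd t.2.2 (fun y => f y t.2.1))) := by
      refine cd_diff le_rfl (H.cd_mderiv_pdf t.1.1 t.2.1 t.2.2 ?_)
      have := t.1.2.2
      omega
    exact h1.comp H.diffg

end Hyp

end Main

section Dvar
open MvPolynomial

variable {d : ℕ}

lemma Vv_inl (m : ℕ) (f g : (Fin d → ℝ) → (Fin d → ℝ)) (x : Fin d → ℝ) (ij : Fin d × Fin d) :
    Vv d m f g x (Sum.inl ij) = (jac f (g x))⁻¹ ij.1 ij.2 := rfl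

lemma Vv_inr (m : ℕ) (f g : (Fin d → ℝ) → (Fin d → ℝ)) (x : Fin d → ℝ)
    (t : {γ' : Fin d → ℕ // 1 ≤ ∑ i, γ' i ∧ ∑ i, γ' i ≤ m} × (Fin d × Fin d)) :
    Vv d m f g x (Sum.inr t) = mderiv t.1.1 (pd t.2.2 (fun y => f y t.2.1)) (g x) := rfl

lemma sum_single_one (q : Fin d) : ∑ i, (Pi.single q 1 : Fin d → ℕ) i = 1 := by
  simp [Pi.single_apply]

lemma sum_update_succ (t : Fin d → ℕ) (q : Fin d) :
    ∑ i, Function.update t q (t q + 1) i = (∑ i, t i) + 1 := by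
  rw [Finset.sum_update_of_mem (Finset.mem_univ q)]
  have h3 : t q + ∑ i ∈ Finset.univ.erase q, t i = ∑ i, t i :=
    Finset.add_sum_erase _ _ (Finset.mem_univ q)
  rw [show Finset.univ \ {q} = Finset.univ.erase q from by
    ext; simp [Finset.mem_erase, and_comm]]
  omega

/-- Derivative of `∂_i` of each "variable" function is a polynomial in the next level's
variables. -/
lemma dvar (m : ℕ) (s : Idx d m) (i : Fin d) :
    ∃ D : MvPolynomial (Idx d (m + 1)) ℝ,
      ∀ (n : ℕ) (f g : (Fin d → ℝ) → (Fin d → ℝ)) (H : Hyp n f g), m + 2 ≤ n → ∀ x,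
        pd i (fun x => Vv d m f g x s) x = MvPolynomial.eval (Vv d (m + 1) f g x) D := by
  cases s with
  | inr s =>
    obtain ⟨⟨t, ht1, ht2⟩, c, e⟩ := s
    refine ⟨∑ q : Fin d,
      X (Sum.inr (⟨Function.update t q (t q + 1),
        by constructor <;> (rw [sum_update_succ]; omega)⟩, (c, e))) *
      X (Sum.inl (q, i)), ?_⟩
    intro n f g H hmn x
    have hn2 : 2 ≤ n := by omega
    have hcd1 : ContDiff ℝ (((∑ j, t j) + 1 : ℕ)) (pd e (fun y => f y c)) := by
      refine cd_mono ?_ (H.cd_pdf c e)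
      omega
    have hFd : DifferentiableAt ℝ (mderiv t (pd e (fun y => f y c))) (g x) := by
      refine (cd_diff le_rfl (H.cd_mderiv_pdf t c e (r := 1) (by omega))) (g x)
    have hchain := pd_comp (mderiv t (pd e (fun y => f y c))) g i x hFd (H.diffg x)
    have hVs : (fun x => Vv d m f g x (Sum.inr (⟨⟨t, ht1, ht2⟩, c, e⟩)))
        = fun x => mderiv t (pd e (fun y => f y c)) (g x) := rfl
    rw [hVs, hchain]
    rw [map_sum]
    refine Finset.sum_congr rfl fun q _ => ?_
    rw [map_mul, MvPolynomial.eval_X, MvPolynomial.eval_X, Vv_inr, Vv_inl]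
    have h1 : pd q (mderiv t (pd e (fun y => f y c)))
        = mderiv (Function.update t q (t q + 1)) (pd e (fun y => f y c)) := by
      rw [pd_mderiv t q hcd1, mderiv_update t q hcd1]
    have h2 : pd i (fun y => g y q) x = (jac f (g x))⁻¹ q i := by
      rw [← H.jacg x]; rfl
    rw [h1, h2]
  | inl s =>
    obtain ⟨a, b⟩ := s
    refine ⟨- ∑ c : Fin d, ∑ p : Fin d,
      X (Sum.inl (a, c)) *
      (∑ q : Fin d, X (Sum.inr (⟨Pi.single q 1,
          ⟨by rw [sum_single_one], by rw [sum_single_one]; omega⟩⟩, (c, p))) * X (Sum.inl (q, i))) *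
      X (Sum.inl (p, b)), ?_⟩
    intro n f g H hmn x
    have hn2 : 2 ≤ n := by omega
    have hdiffu : ∀ c p : Fin d, Differentiable ℝ (fun z => pd p (fun y => f y c) (g z)) :=
      fun c p => (cd_diff (by omega) (H.cd_pdf c p)).comp H.diffg
    have hdiffw : ∀ c p : Fin d, Differentiable ℝ (pd p (fun y => g y c)) :=
      fun c p => cd_diff (by omega) (H.cd_pdg c p)
    set A : Matrix (Fin d) (Fin d) ℝ := jac f (g x) with hA
    set W : Matrix (Fin d) (Fin d) ℝ := A⁻¹ with hW
    set N : Matrix (Fin d) (Fin d) ℝ :=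
      Matrix.of (fun c p => pd i (fun z => pd p (fun y => f y c) (g z)) x) with hN
    set M : Matrix (Fin d) (Fin d) ℝ :=
      Matrix.of (fun c b' => pd i (pd b' (fun y => g y c)) x) with hM
    -- Step A : A * M + N * jac g x = 0
    have stepA : A * M + N * jac g x = 0 := by
      ext a' b'
      have hSconst : (fun z => ∑ c, pd c (fun y => f y a') (g z) * pd b' (fun y => g y c) z)
          = fun _ => (1 : Matrix (Fin d) (Fin d) ℝ) a' b' := by
        funext z
        have := jac_comp_eq_one H.hfg (H.hf.differentiable (by have := H.hn; norm_cast; omega))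
          (H.hg.differentiable (by have := H.hn; norm_cast; omega)) z
        have h2 := congrArg (fun Q => Q a' b') this
        simpa [Matrix.mul_apply, jac_apply] using h2
      have hzero : pd i (fun z => ∑ c, pd c (fun y => f y a') (g z)
          * pd b' (fun y => g y c) z) x = 0 := by
        rw [hSconst]; exact pd_const i _ x
      have hexp : pd i (fun z => ∑ c, pd c (fun y => f y a') (g z)
            * pd b' (fun y => g y c) z) x
          = ∑ c, (pd c (fun y => f y a') (g x) * pd i (pd b' (fun y => g y c)) x
            + pd i (fun z => pd c (fun y => f y a') (g z)) x * pd b' (fun y => g y c) x) := by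
        rw [pd_sum i (fun c _ => (show DifferentiableAt ℝ (fun z => pd c (fun y => f y a') (g z) * pd b' (fun y => g y c) z) x from ((hdiffu a' c) x).mul ((hdiffw c b') x)))]
        exact Finset.sum_congr rfl fun c _ => pd_mul i ((hdiffu a' c) x) ((hdiffw c b') x)
      rw [hexp] at hzero
      simp only [Matrix.add_apply, Matrix.mul_apply, Matrix.zero_apply]
      rw [← hzero, Finset.sum_add_distrib]
      rfl
    -- Step B : M = -(W * (N * W))
    have hdet : IsUnit A.det := (Matrix.isUnit_iff_isUnit_det _).mp (H.hU (g x))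
    have hAM : A * M = -(N * W) := by
      have hjg : jac g x = W := H.jacg x
      rw [hjg] at stepA
      exact eq_neg_of_add_eq_zero_left stepA
    have stepB : M = -(W * (N * W)) := by
      calc M = 1 * M := (one_mul M).symm
        _ = (A⁻¹ * A) * M := by rw [Matrix.nonsing_inv_mul A hdet]
        _ = A⁻¹ * (A * M) := by rw [Matrix.mul_assoc]
        _ = W * (-(N * W)) := by rw [hAM, hW]
        _ = -(W * (N * W)) := by rw [Matrix.mul_neg]
      -- done
    -- Step D : entries of N
    have stepD : ∀ c p, N c p
        = ∑ q, mderiv (Pi.single q 1) (pd p (fun y => f y c)) (g x) * W q i := by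
      intro c p
      have h1 : N c p = pd i (fun z => pd p (fun y => f y c) (g z)) x := rfl
      have hchain := pd_comp (pd p (fun y => f y c)) g i x
        ((cd_diff (by omega) (H.cd_pdf c p)) (g x)) (H.diffg x)
      rw [h1, hchain]
      refine Finset.sum_congr rfl fun q _ => ?_
      have h2 : pd q (pd p (fun y => f y c)) = mderiv (Pi.single q 1) (pd p (fun y => f y c)) := by
        rw [mderiv_single q (cd_mono (by omega) (H.cd_pdf c p))]
      have h3 : pd i (fun y => g y q) x = W q i := by rw [hW, ← H.jacg x]; rfl
      rw [h2, h3]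
    -- Assemble
    have hLHS : (fun x => Vv d m f g x (Sum.inl (a, b))) = pd b (fun y => g y a) :=
      H.inv_entry a b
    rw [hLHS]
    have hMab : pd i (pd b (fun y => g y a)) x = M a b := rfl
    rw [hMab, stepB]
    simp only [Matrix.neg_apply, Matrix.mul_apply, map_neg, map_sum, map_mul,
      MvPolynomial.eval_X, Vv_inl, Vv_inr]
    simp only [← hA, ← hW]
    congr 1
    refine Finset.sum_congr rfl fun c _ => ?_
    rw [Finset.mul_sum]
    refine Finset.sum_congr rfl fun p _ => ?_
    rw [stepD c p]
    ring

end Dvar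

section Final
open MvPolynomial

variable {d : ℕ}

lemma diffEval {m n : ℕ} {f g : (Fin d → ℝ) → (Fin d → ℝ)} (H : Hyp n f g)
    (hmn : m + 2 ≤ n) (P : MvPolynomial (Idx d m) ℝ) :
    Differentiable ℝ (fun x => eval (Vv d m f g x) P) := by
  induction P using MvPolynomial.induction_on with
  | C a => simp only [eval_C]; exact differentiable_const a
  | add p q hp hq => simp only [map_add]; exact hp.add hq
  | mul_X p s hp => simp only [map_mul, eval_X]; exact hp.mul (H.diffV hmn s)

lemma deval (m : ℕ) (P : MvPolynomial (Idx d m) ℝ) (i : Fin d) :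
    ∃ Q : MvPolynomial (Idx d (m + 1)) ℝ,
      ∀ (n : ℕ) (f g : (Fin d → ℝ) → (Fin d → ℝ)) (H : Hyp n f g), m + 2 ≤ n → ∀ x,
        pd i (fun x => eval (Vv d m f g x) P) x = eval (Vv d (m + 1) f g x) Q := by
  induction P using MvPolynomial.induction_on with
  | C a =>
    refine ⟨0, fun n f g H hmn x => ?_⟩
    have h1 : (fun x => eval (Vv d m f g x) (C a)) = fun _ => a := by
      funext z; simp
    rw [h1, map_zero]
    exact pd_const i a x
  | add p q hp hq =>
    obtain ⟨Qp, hQp⟩ := hp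
    obtain ⟨Qq, hQq⟩ := hq
    refine ⟨Qp + Qq, fun n f g H hmn x => ?_⟩
    have h1 : (fun x => eval (Vv d m f g x) (p + q))
        = fun x => eval (Vv d m f g x) p + eval (Vv d m f g x) q := by
      funext z; simp
    rw [h1, pd_add i ((diffEval H hmn p) x) ((diffEval H hmn q) x), map_add,
      hQp n f g H hmn x, hQq n f g H hmn x]
  | mul_X p s hp =>
    obtain ⟨Qp, hQp⟩ := hp
    obtain ⟨Ds, hDs⟩ := dvar m s i
    refine ⟨rename (incl d m) p * Ds + Qp * X (incl d m s), fun n f g H hmn x => ?_⟩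
    have h1 : (fun x => eval (Vv d m f g x) (p * X s))
        = fun x => eval (Vv d m f g x) p * Vv d m f g x s := by
      funext z; simp
    rw [h1, pd_mul i ((diffEval H hmn p) x) ((H.diffV hmn s) x)]
    rw [map_add, map_mul, map_mul, eval_X, hQp n f g H hmn x, hDs n f g H hmn x]
    rw [MvPolynomial.eval_rename]
    have hcomp : Vv d (m + 1) f g x ∘ incl d m = Vv d m f g x := funext (Vv_incl m f g x)
    rw [hcomp, Vv_incl]

lemma sum_update_pred (γ : Fin d → ℕ) (i : Fin d) (hi : 1 ≤ γ i) :
    (∑ j, Function.update γ i (γ i - 1) j) + 1 = ∑ j, γ j := by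
  rw [Finset.sum_update_of_mem (Finset.mem_univ i)]
  have h3 : γ i + ∑ j ∈ Finset.univ.erase i, γ j = ∑ j, γ j :=
    Finset.add_sum_erase _ _ (Finset.mem_univ i)
  rw [show Finset.univ \ {i} = Finset.univ.erase i from by
    ext; simp [Finset.mem_erase, and_comm]]
  omega

lemma exists_pos (γ : Fin d → ℕ) (h : 1 ≤ ∑ i, γ i) : ∃ i, 1 ≤ γ i := by
  by_contra hc
  push_neg at hc
  have : ∑ i, γ i = 0 := Finset.sum_eq_zero (fun i _ => by have := hc i; omega)
  omega

lemma key (m : ℕ) : ∀ γ : Fin d → ℕ, (∑ i, γ i = m + 1) → ∀ k : Fin d,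
    ∃ P : MvPolynomial (Idx d m) ℝ,
      ∀ (n : ℕ) (f g : (Fin d → ℝ) → (Fin d → ℝ)) (H : Hyp n f g), m + 1 ≤ n → ∀ x,
        mderiv γ (fun y => g y k) x = eval (Vv d m f g x) P := by
  induction m with
  | zero =>
    intro γ hγ k
    obtain ⟨i, hi⟩ := exists_pos γ (by omega)
    refine ⟨X (Sum.inl (k, i)), fun n f g H hn1 x => ?_⟩
    have hgk : ContDiff ℝ ((∑ j, γ j : ℕ)) (fun y => g y k) := by
      rw [hγ]
      exact cd_mono hn1 (diff_comp_proj H.hg k)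
    have hpeel := mderiv_peel γ i hi hgk
    have hzero : ∀ j, Function.update γ i (γ i - 1) j = 0 := by
      have hs := sum_update_pred γ i hi
      rw [hγ] at hs
      intro j
      exact (Finset.sum_eq_zero_iff.mp (by omega)) j (Finset.mem_univ j)
    rw [hpeel, mderiv_zero hzero, eval_X, Vv_inl]
    rw [← H.jacg x]
    rfl
  | succ m ih =>
    intro γ hγ k
    obtain ⟨i, hi⟩ := exists_pos γ (by omega)
    set γ' := Function.update γ i (γ i - 1) with hγ'
    have hs : ∑ j, γ' j = m + 1 := by
      have h := sum_update_pred γ i hi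
      rw [← hγ'] at h
      omega
    obtain ⟨P', hP'⟩ := ih γ' hs k
    obtain ⟨Q, hQ⟩ := deval m P' i
    refine ⟨Q, fun n f g H hn1 x => ?_⟩
    have hgk : ContDiff ℝ ((∑ j, γ j : ℕ)) (fun y => g y k) := by
      rw [hγ]
      exact cd_mono hn1 (diff_comp_proj H.hg k)
    have hpeel := mderiv_peel γ i hi hgk
    have hfun : mderiv γ' (fun y => g y k) = fun x => eval (Vv d m f g x) P' :=
      funext (hP' n f g H (by omega))
    rw [hpeel, hfun]
    exact hQ n f g H (by omega) x

end Final
end Stmt7aux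

/-- Let `f : ℝ^d → ℝ^d` be a `C^n` diffeomorphism with inverse `g` and
everywhere invertible Jacobian.  Then `∇g(x) = [∇f(g(x))]⁻¹`, and for every multi-index
`γ` with `1 ≤ |γ| ≤ n` and every component `k`, `∂^γ g^k (x)` is given by a polynomial
`P` — depending only on `d` and `γ`, not on `f` or `x` — in the entries of
`[∇f(g(x))]⁻¹` and the entries of `∂^{γ'} ∇f (g(x))` over multi-indices `γ'` with
`1 ≤ |γ'| ≤ |γ| − 1`. -/
theorem stmt_7 (d n : ℕ) (hd : 1 ≤ d) (hn : 1 ≤ n) (γ : Fin d → ℕ)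
    (hγ1 : 1 ≤ ∑ i, γ i) (hγn : ∑ i, γ i ≤ n) (k : Fin d) :
    ∃ P : MvPolynomial
        ((Fin d × Fin d) ⊕
          ({γ' : Fin d → ℕ // 1 ≤ ∑ i, γ' i ∧ ∑ i, γ' i ≤ (∑ i, γ i) - 1} ×
            (Fin d × Fin d))) ℝ,
      ∀ f g : (Fin d → ℝ) → (Fin d → ℝ),
        Function.LeftInverse g f →
        Function.RightInverse g f →
        ContDiff ℝ n f →
        ContDiff ℝ n g →
        (∀ x, IsUnit (jac f x)) →
        (∀ x, jac g x = (jac f (g x))⁻¹) ∧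
        ∀ x, mderiv γ (fun y => g y k) x =
          MvPolynomial.eval
            (Sum.elim
              (fun ij : Fin d × Fin d => (jac f (g x))⁻¹ ij.1 ij.2)
              (fun t => mderiv t.1.1 (pd t.2.2 (fun y => f y t.2.1)) (g x)))
            P := by
  obtain ⟨P, hP⟩ := Stmt7aux.key ((∑ i, γ i) - 1) γ (by omega) k
  refine ⟨P, fun f g hl hr hf hg hU => ?_⟩
  have H : Stmt7aux.Hyp n f g := ⟨fun x => hr x, hf, hg, hU, hn⟩
  refine ⟨fun x => H.jacg x, fun x => ?_⟩
  exact hP n f g H (by omega) x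
end
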